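/- arXiv:1904.01320 — 7 statements merged into one kernel-verified Lean document; each statement's English description precedes it below -/
import Mathlib

section
/- Let (Y_i)_{i≥1} be a sequence of i.i.d. integrable real random variables with mean m = E[Y_1], and let T > 0. Then sup_{t ∈ [0,T]} | (1/n) ∑_{i=1}^{⌊nt⌋} Y_i − t·m | → 0 almost surely as n → ∞ (functional strong law of large numbers with uniform convergence over the time interval). -/
open MeasureTheory ProbabilityTheory Filter Finset

/-- If `a k / k → 0` and `a 0 = 0`, then the running maximum of `|a|` up to `⌊n T⌋₊`,
divided by `n`, tends to `0`. -/
lemma prefix_max_div_tendsto (a : ℕ → ℝ) (ha0 : a 0 = 0) (T : ℝ) (hT : 0 < T)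
    (h : Tendsto (fun k : ℕ => a k / k) atTop (nhds 0)) :
    Tendsto (fun n : ℕ =>
        ((Finset.range (⌊(n : ℝ) * T⌋₊ + 1)).sup' (by simp) (fun k => |a k|)) / n)
      atTop (nhds 0) := by
  rw [Metric.tendsto_atTop]
  intro ε hε
  have hε2T : 0 < ε / 2 / T := by positivity
  obtain ⟨N₀, hN₀⟩ := (Metric.tendsto_atTop.1 h) (ε / 2 / T) hε2T
  set C := (Finset.range (N₀ + 1)).sup' (by simp) (fun k => |a k|) with hC
  have hC0 : 0 ≤ C := by
    refine le_trans ?_ (Finset.le_sup' (fun k => |a k|) (by simp : 0 ∈ Finset.range (N₀ + 1)))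
    simp [ha0]
  obtain ⟨N₁, hN₁⟩ := exists_nat_gt (C / (ε / 2))
  refine ⟨max N₁ 1, fun n hn => ?_⟩
  have hn1 : 1 ≤ n := le_trans (le_max_right _ _) hn
  have hnpos : (0 : ℝ) < n := by exact_mod_cast hn1
  have hCn : C / n < ε / 2 := by
    rw [div_lt_iff₀ hnpos]
    have hN₁n : (N₁ : ℝ) ≤ n := by exact_mod_cast le_trans (le_max_left _ _) hn
    calc C < N₁ * (ε / 2) := by
            rw [div_lt_iff₀ (by positivity)] at hN₁
            linarith
      _ ≤ n * (ε / 2) := by nlinarith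
      _ = ε / 2 * n := by ring
  have key : ∀ k ∈ Finset.range (⌊(n : ℝ) * T⌋₊ + 1), |a k| ≤ max C (ε / 2 * n) := by
    intro k hk
    rcases le_or_gt k N₀ with hkN | hkN
    · exact le_max_of_le_left (Finset.le_sup' (fun k => |a k|)
        (Finset.mem_range.2 (Nat.lt_succ_of_le hkN)))
    · have hk1 : 1 ≤ k := by omega
      have hkpos : (0 : ℝ) < k := by exact_mod_cast hk1
      have := hN₀ k hkN.le
      rw [Real.dist_eq, sub_zero, abs_div, abs_of_pos hkpos, div_lt_iff₀ hkpos] at this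
      have hknT : (k : ℝ) ≤ n * T := by
        have h1 : k ≤ ⌊(n : ℝ) * T⌋₊ := Nat.lt_succ_iff.1 (Finset.mem_range.1 hk)
        calc (k : ℝ) ≤ ⌊(n : ℝ) * T⌋₊ := by exact_mod_cast h1
          _ ≤ n * T := Nat.floor_le (by positivity)
      refine le_max_of_le_right ?_
      calc |a k| ≤ ε / 2 / T * k := this.le
        _ ≤ ε / 2 / T * (n * T) := by
            have : (0:ℝ) ≤ ε / 2 / T := hε2T.le
            nlinarith
        _ = ε / 2 * n := by field_simp
  have hsup : (Finset.range (⌊(n : ℝ) * T⌋₊ + 1)).sup' (by simp) (fun k => |a k|)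
      ≤ max C (ε / 2 * n) := Finset.sup'_le _ _ key
  have hsup0 : 0 ≤ (Finset.range (⌊(n : ℝ) * T⌋₊ + 1)).sup' (by simp) (fun k => |a k|) := by
    refine le_trans ?_ (Finset.le_sup' (fun k => |a k|) (by simp : 0 ∈ _))
    simp [ha0]
  rw [Real.dist_eq, sub_zero, abs_of_nonneg (by positivity)]
  rw [div_lt_iff₀ hnpos]
  calc (Finset.range (⌊(n : ℝ) * T⌋₊ + 1)).sup' (by simp) (fun k => |a k|)
      ≤ max C (ε / 2 * n) := hsup
    _ < ε * n := by
        rw [max_lt_iff]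
        constructor
        · rw [div_lt_iff₀ hnpos] at hCn; nlinarith
        · nlinarith

/-- Functional strong law of large numbers: for an i.i.d. integrable sequence
`(Y i)` with mean `m`, the partial-sum process `t ↦ (1/n) ∑_{i=1}^{⌊nt⌋} Y_i`
converges almost surely to `t ↦ t·m`, uniformly over `t ∈ [0, T]`. -/
theorem functional_slln
    {Ω : Type*} [MeasurableSpace Ω] (μ : Measure Ω) [IsProbabilityMeasure μ]
    (Y : ℕ → Ω → ℝ)
    (hmeas : ∀ i, Measurable (Y i))
    (hindep : iIndepFun Y μ)
    (hident : ∀ i, IdentDistrib (Y i) (Y 0) μ μ)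
    (hint : Integrable (Y 0) μ)
    (m : ℝ) (hm : m = ∫ ω, Y 0 ω ∂μ)
    (T : ℝ) (hT : 0 < T) :
    ∀ᵐ ω ∂μ,
      Tendsto
        (fun n : ℕ =>
          ⨆ t : Set.Icc (0 : ℝ) T,
            |(1 / (n : ℝ)) * ∑ i ∈ Finset.range ⌊(n : ℝ) * (t : ℝ)⌋₊, Y i ω
              - (t : ℝ) * m|)
        atTop (nhds 0) := by
  have hpair : Pairwise (Function.onFun (IndepFun · · μ) Y) := fun i j hij => hindep.indepFun hij
  filter_upwards [strong_law_ae_real Y hint hpair hident] with ω hω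
  -- the centered partial sums
  set a : ℕ → ℝ := fun k => (∑ i ∈ Finset.range k, Y i ω) - k * m with ha
  have ha0 : a 0 = 0 := by simp [ha]
  have hadiv : Tendsto (fun k : ℕ => a k / k) atTop (nhds 0) := by
    have h1 : Tendsto (fun k : ℕ => (∑ i ∈ Finset.range k, Y i ω) / k - m) atTop (nhds 0) := by
      have := hω.sub_const m
      rw [← hm] at this
      simpa using this
    refine h1.congr' ?_
    filter_upwards [eventually_ge_atTop 1] with k hk
    have hkpos : (0 : ℝ) < k := by exact_mod_cast hk
    field_simp [ha]
    rfl
  have hM := prefix_max_div_tendsto a ha0 T hT hadiv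
  have hlim : Tendsto (fun n : ℕ =>
      ((Finset.range (⌊(n : ℝ) * T⌋₊ + 1)).sup' (by simp) (fun k => |a k|)) / n + |m| / n)
      atTop (nhds 0) := by
    have h2 : Tendsto (fun n : ℕ => |m| / n) atTop (nhds 0) := by
      simpa using tendsto_const_nhds.div_atTop (tendsto_natCast_atTop_atTop (R := ℝ))
    simpa using hM.add h2
  refine squeeze_zero' ?_ ?_ hlim
  · filter_upwards with n
    exact Real.iSup_nonneg fun t => abs_nonneg _
  · filter_upwards [eventually_ge_atTop 1] with n hn
    have hnpos : (0 : ℝ) < n := by exact_mod_cast hn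
    have hsup0 : 0 ≤ (Finset.range (⌊(n : ℝ) * T⌋₊ + 1)).sup' (by simp) (fun k => |a k|) := by
      refine le_trans ?_ (Finset.le_sup' (fun k => |a k|) (by simp : 0 ∈ _))
      simp [ha0]
    refine Real.iSup_le (fun t => ?_)
      (add_nonneg (div_nonneg hsup0 hnpos.le) (div_nonneg (abs_nonneg _) hnpos.le))
    obtain ⟨t, ht0, htT⟩ := t
    set k : ℕ := ⌊(n : ℝ) * t⌋₊ with hk
    have hkle : (k : ℝ) ≤ n * t := Nat.floor_le (by positivity)
    have hklt : (n : ℝ) * t < k + 1 := Nat.lt_floor_add_one _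
    have hkmem : k ∈ Finset.range (⌊(n : ℝ) * T⌋₊ + 1) := by
      refine Finset.mem_range.2 (Nat.lt_succ_of_le (Nat.floor_le_floor ?_))
      nlinarith
    have hsup := Finset.le_sup' (fun k => |a k|) hkmem
    have heq : (1 / (n : ℝ)) * ∑ i ∈ Finset.range k, Y i ω - t * m
        = a k / n + ((k : ℝ) / n - t) * m := by
      field_simp [ha]
      ring
    rw [heq]
    calc |a k / n + ((k : ℝ) / n - t) * m|
        ≤ |a k / n| + |((k : ℝ) / n - t) * m| := abs_add_le _ _
      _ ≤ ((Finset.range (⌊(n : ℝ) * T⌋₊ + 1)).sup' (by simp) (fun k => |a k|)) / n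
          + |m| / n := by
          refine add_le_add ?_ ?_
          · rw [abs_div, abs_of_pos hnpos]
            gcongr
          · rw [abs_mul]
            have habs : |(k : ℝ) / n - t| ≤ 1 / n := by
              have e : (k : ℝ) / n - t = ((k : ℝ) - n * t) / n := by field_simp
              rw [e, abs_div, abs_of_pos hnpos]
              gcongr
              rw [abs_le]
              constructor <;> linarith
            calc |(k : ℝ) / n - t| * |m| ≤ (1 / n) * |m| := by
                  exact mul_le_mul_of_nonneg_right habs (abs_nonneg _)
              _ = |m| / n := by ring
end

section
/- Let (X_i)_{i≥1} be i.i.d. real random variables with E[|X_1|^4] < ∞, and fix reals 0 < h ≤ T − h with T > 0. For k ∈ {1,2,3,4} and n ≥ 1 define the windowed empirical k-th moment μ̂^{⟨k⟩}_n(t) = (1/(nh)) ∑_{i=⌊n(t−h)⌋+1}^{⌊nt⌋} X_i^k for t ∈ [h, T]. Then for each k ∈ {1,2,3,4}, sup_{t ∈ [h,T]} | μ̂^{⟨k⟩}_n(t) − E[X_1^k] | → 0 almost surely as n → ∞. -/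
open MeasureTheory ProbabilityTheory Filter Finset

lemma pow_abs_le_one_add (x : ℝ) (k : ℕ) (hk : k ≤ 4) : |x| ^ k ≤ 1 + |x| ^ 4 := by
  rcases le_total (|x|) 1 with hx | hx
  · have : |x| ^ k ≤ 1 := pow_le_one₀ (abs_nonneg x) hx
    nlinarith [pow_nonneg (abs_nonneg x) 4]
  · have : |x| ^ k ≤ |x| ^ 4 := pow_le_pow_right₀ hx hk
    linarith

/-- If `d m / m → 0` then the running max of `|d m|` over `m ≤ ⌊nT⌋` is `o(n)`. -/
lemma sup_div_tendsto (d : ℕ → ℝ) (hd : Tendsto (fun m : ℕ => d m / m) atTop (nhds 0))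
    (T : ℝ) (hT : 0 < T) :
    Tendsto (fun n : ℕ =>
      ((Finset.range (⌊(n : ℝ) * T⌋₊ + 1)).sup' ⟨0, Finset.mem_range.2 (Nat.succ_pos _)⟩
        fun m => |d m|) / n) atTop (nhds 0) := by
  rw [Metric.tendsto_atTop]
  intro ε hε
  have hε2 : 0 < ε / (2 * T) := by positivity
  obtain ⟨M, hM⟩ := (Metric.tendsto_atTop.1 hd) (ε / (2 * T)) hε2
  set C : ℝ := (Finset.range (M + 1)).sup' ⟨0, Finset.mem_range.2 (Nat.succ_pos _)⟩
    fun m => |d m| with hC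
  have hC0 : 0 ≤ C := by
    rw [hC]; exact le_trans (abs_nonneg (d 0)) (Finset.le_sup' (fun m => |d m|) (Finset.mem_range.2 (by omega)))
  obtain ⟨N0, hN0⟩ := exists_nat_gt (2 * C / ε)
  refine ⟨max N0 1, fun n hn => ?_⟩
  have hn1 : 1 ≤ n := le_trans (le_max_right _ _) hn
  have hnN0 : (N0 : ℝ) ≤ n := Nat.cast_le.2 (le_trans (le_max_left _ _) hn)
  have hnpos : (0 : ℝ) < n := by exact_mod_cast hn1
  set G : ℝ := (Finset.range (⌊(n : ℝ) * T⌋₊ + 1)).sup' ⟨0, Finset.mem_range.2 (Nat.succ_pos _)⟩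
    fun m => |d m| with hG
  have hGbound : G ≤ C + ε / (2 * T) * ((n : ℝ) * T) := by
    apply Finset.sup'_le
    intro m hm
    rcases le_or_gt m M with hmM | hmM
    · have h1 : |d m| ≤ C := by
        rw [hC]; exact Finset.le_sup' (fun m => |d m|) (Finset.mem_range.2 (by omega))
      have h2 : (0:ℝ) ≤ ε / (2 * T) * ((n : ℝ) * T) := by positivity
      linarith
    · have hmM' : M ≤ m := hmM.le
      have h1 : |d m| / m < ε / (2 * T) := by
        simpa using hM m hmM'
      have hm0 : 0 < m := by omega
      have hm1 : (0:ℝ) < m := by exact_mod_cast hm0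
      have h2 : |d m| = |d m| / m * m := by field_simp
      have hmn : (m : ℝ) ≤ (n : ℝ) * T := by
        have : m ≤ ⌊(n : ℝ) * T⌋₊ := Nat.lt_succ_iff.1 (Finset.mem_range.1 hm)
        calc (m : ℝ) ≤ ⌊(n : ℝ) * T⌋₊ := Nat.cast_le.2 this
          _ ≤ (n : ℝ) * T := Nat.floor_le (by positivity)
      calc |d m| = |d m| / m * m := h2
        _ ≤ ε / (2 * T) * ((n:ℝ) * T) := by
            apply mul_le_mul h1.le hmn hm1.le hε2.le
        _ ≤ C + ε / (2 * T) * ((n:ℝ) * T) := by linarith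
  have hG0 : 0 ≤ G := by
    rw [hG]; exact le_trans (abs_nonneg (d 0)) (Finset.le_sup' (fun m => |d m|) (Finset.mem_range.2 (by omega)))
  rw [Real.dist_eq, sub_zero, abs_of_nonneg (by positivity : (0:ℝ) ≤ G / n)]
  have key : G < ε * n := by
    have h1 : ε / (2 * T) * ((n : ℝ) * T) = ε * n / 2 := by field_simp
    have h2 : C < ε * n / 2 := by
      have : 2 * C / ε < n := lt_of_lt_of_le hN0 hnN0
      rw [div_lt_iff₀ hε] at this
      linarith
    rw [h1] at hGbound
    linarith
  rw [div_lt_iff₀ hnpos]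
  linarith

lemma det_windowed (y : ℕ → ℝ) (E h T : ℝ) (hh : 0 < h) (hhT : h ≤ T - h)
    (hy : Tendsto (fun m : ℕ => (∑ i ∈ Finset.range m, y i) / m) atTop (nhds E)) :
    Tendsto (fun n : ℕ => ⨆ t : Set.Icc h T,
      |(∑ i ∈ Finset.Ico ⌊(n : ℝ) * ((t : ℝ) - h)⌋₊ ⌊(n : ℝ) * (t : ℝ)⌋₊, y i) / ((n : ℝ) * h)
        - E|) atTop (nhds 0) := by
  have hT : 0 < T := by linarith
  have hhTle : h ≤ T := by linarith
  haveI : Nonempty (Set.Icc h T) := ⟨⟨h, Set.mem_Icc.2 ⟨le_rfl, hhTle⟩⟩⟩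
  set S : ℕ → ℝ := fun m => ∑ i ∈ Finset.range m, y i with hS
  have hD : Tendsto (fun m : ℕ => (S m - m * E) / m) atTop (nhds 0) := by
    have h1 : Tendsto (fun m : ℕ => S m / m - E) atTop (nhds (E - E)) :=
      hy.sub tendsto_const_nhds
    rw [sub_self] at h1
    apply h1.congr'
    filter_upwards [eventually_ge_atTop 1] with m hm
    have hm0 : (0:ℝ) < m := by exact_mod_cast hm
    field_simp
  have hGd := sup_div_tendsto (fun m => S m - m * E) hD T hT
  set G : ℕ → ℝ := fun n =>
    (Finset.range (⌊(n : ℝ) * T⌋₊ + 1)).sup' ⟨0, Finset.mem_range.2 (Nat.succ_pos _)⟩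
      fun m => |S m - m * E| with hGdef
  set B : ℕ → ℝ := fun n => (2 * (G n / n) + |E| / n) / h with hB
  have hBtend : Tendsto B atTop (nhds 0) := by
    have h1 : Tendsto (fun n : ℕ => 2 * (G n / n) + |E| / n) atTop (nhds (2 * 0 + 0)) :=
      (hGd.const_mul 2).add (tendsto_const_div_atTop_nhds_zero_nat |E|)
    have h2 := h1.div_const h
    simpa using h2
  apply squeeze_zero' (Eventually.of_forall fun n =>
    Real.iSup_nonneg fun t => abs_nonneg _) _ hBtend
  filter_upwards [eventually_ge_atTop 1] with n hn
  have hn0 : (0:ℝ) < n := by exact_mod_cast hn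
  have hnh : (0:ℝ) < (n : ℝ) * h := mul_pos hn0 hh
  have hGn0 : 0 ≤ G n := le_trans (abs_nonneg _)
    (Finset.le_sup' (fun m => |S m - m * E|)
      (Finset.mem_range.2 (Nat.succ_pos _) : (0:ℕ) ∈ Finset.range (⌊(n : ℝ) * T⌋₊ + 1)))
  have hBn0 : 0 ≤ B n := by
    have h1 : 0 ≤ G n / n := div_nonneg hGn0 (Nat.cast_nonneg n)
    have h2 : 0 ≤ |E| / (n:ℝ) := div_nonneg (abs_nonneg E) (Nat.cast_nonneg n)
    have : 0 ≤ 2 * (G n / n) + |E| / n := by linarith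
    exact div_nonneg this hh.le
  apply Real.iSup_le _ hBn0
  rintro ⟨t, ht⟩
  rw [Set.mem_Icc] at ht
  simp only
  set a : ℕ := ⌊(n : ℝ) * (t - h)⌋₊ with ha
  set b : ℕ := ⌊(n : ℝ) * t⌋₊ with hb
  have hth : 0 ≤ t - h := by linarith [ht.1]
  have ht0 : 0 ≤ t := by linarith [ht.1, hh]
  have hab : a ≤ b := Nat.floor_mono (by nlinarith)
  have hsum : ∑ i ∈ Finset.Ico a b, y i = S b - S a := Finset.sum_Ico_eq_sub y hab
  have hbT : b ≤ ⌊(n : ℝ) * T⌋₊ := Nat.floor_mono (by nlinarith [ht.2])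
  have haT : a ≤ ⌊(n : ℝ) * T⌋₊ := le_trans hab hbT
  have hDb : |S b - b * E| ≤ G n :=
    Finset.le_sup' (fun m => |S m - m * E|) (Finset.mem_range.2 (by omega))
  have hDa : |S a - a * E| ≤ G n :=
    Finset.le_sup' (fun m => |S m - m * E|) (Finset.mem_range.2 (by omega))
  have hb1 : (b:ℝ) ≤ (n:ℝ) * t := Nat.floor_le (by positivity)
  have hb2 : (n:ℝ) * t < b + 1 := Nat.lt_floor_add_one _
  have ha1 : (a:ℝ) ≤ (n:ℝ) * (t - h) := Nat.floor_le (by positivity)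
  have ha2 : (n:ℝ) * (t - h) < a + 1 := Nat.lt_floor_add_one _
  have hexp : (n:ℝ) * (t - h) = (n:ℝ) * t - (n:ℝ) * h := by ring
  have hfloor : |(b:ℝ) - a - (n:ℝ) * h| ≤ 1 := by
    rw [abs_le]
    constructor <;> [linarith; linarith]
  have key : (S b - S a) / ((n:ℝ) * h) - E =
      ((S b - b * E) - (S a - a * E) + ((b:ℝ) - a - (n:ℝ) * h) * E) / ((n:ℝ) * h) := by
    field_simp
    ring
  rw [hsum, key]
  have hnum : |(S b - b * E) - (S a - a * E) + ((b:ℝ) - a - (n:ℝ) * h) * E|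
      ≤ G n + G n + |E| := by
    calc |(S b - b * E) - (S a - a * E) + ((b:ℝ) - a - (n:ℝ) * h) * E|
        ≤ |(S b - b * E) - (S a - a * E)| + |((b:ℝ) - a - (n:ℝ) * h) * E| := abs_add_le _ _
      _ ≤ (|S b - b * E| + |S a - a * E|) + |(b:ℝ) - a - (n:ℝ) * h| * |E| := by
          gcongr
          · exact abs_sub _ _
          · rw [abs_mul]
      _ ≤ G n + G n + 1 * |E| := by
          gcongr
      _ = G n + G n + |E| := by ring
  calc |((S b - b * E) - (S a - a * E) + ((b:ℝ) - a - (n:ℝ) * h) * E) / ((n:ℝ) * h)|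
      = |(S b - b * E) - (S a - a * E) + ((b:ℝ) - a - (n:ℝ) * h) * E| / ((n:ℝ) * h) := by
        rw [abs_div, abs_of_pos hnh]
    _ ≤ (G n + G n + |E|) / ((n:ℝ) * h) := by gcongr
    _ = B n := by
        rw [hB]
        field_simp
        ring

/-- The windowed empirical `k`-th moment of the i.i.d. sequence `(X i)`
over the moving window `(t-h, t]`, i.e. `(1/(nh)) ∑_{⌊n(t-h)⌋ < i ≤ ⌊nt⌋} X_i^k`
(sequence indexed from 0 here, so the sum runs over `⌊n(t-h)⌋ ≤ i < ⌊nt⌋`). -/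
noncomputable def windowedMoment (n : ℕ) (h t : ℝ) (k : ℕ) (x : ℕ → ℝ) : ℝ :=
  (∑ i ∈ Finset.Ico ⌊(n : ℝ) * (t - h)⌋₊ ⌊(n : ℝ) * t⌋₊, (x i) ^ k) / ((n : ℝ) * h)

/-- For i.i.d. random variables with finite fourth moment, the windowed empirical
`k`-th moments (`k = 1,…,4`) converge almost surely to `E[X_1^k]`, uniformly
over `t ∈ [h, T]`. -/
theorem windowed_moments_uniform_slln
    {Ω : Type*} [MeasurableSpace Ω] (μ : Measure Ω) [IsProbabilityMeasure μ]
    (X : ℕ → Ω → ℝ)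
    (hmeas : ∀ i, Measurable (X i))
    (hindep : iIndepFun X μ)
    (hident : ∀ i, IdentDistrib (X i) (X 0) μ μ)
    (hint4 : Integrable (fun ω => |X 0 ω| ^ 4) μ)
    (h T : ℝ) (hh : 0 < h) (hhT : h ≤ T - h) (hT : 0 < T) :
    ∀ k : ℕ, 1 ≤ k → k ≤ 4 →
      ∀ᵐ ω ∂μ,
        Tendsto
          (fun n : ℕ =>
            ⨆ t : Set.Icc h T,
              |windowedMoment n h (t : ℝ) k (fun i => X i ω)
                - ∫ ω', (X 0 ω') ^ k ∂μ|)
          atTop (nhds 0) := by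
  intro k hk1 hk4
  set Y : ℕ → Ω → ℝ := fun i ω => X i ω ^ k with hY
  have hYmeas : ∀ i, Measurable (Y i) := fun i => (hmeas i).pow_const k
  have hYint : Integrable (Y 0) μ := by
    refine (((integrable_const (1:ℝ)).add hint4).mono' (hYmeas 0).aestronglyMeasurable ?_)
    filter_upwards with ω
    simp only [hY, Real.norm_eq_abs, Pi.add_apply]
    rw [abs_pow]
    exact pow_abs_le_one_add (X 0 ω) k hk4
  have hYindep : iIndepFun Y μ :=
    hindep.comp (fun _ => fun x : ℝ => x ^ k) (fun _ => measurable_id.pow_const k)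
  have hYpair : Pairwise (Function.onFun (IndepFun · · μ) Y) := fun i j hij => hYindep.indepFun hij
  have hYident : ∀ i, IdentDistrib (Y i) (Y 0) μ μ := fun i =>
    (hident i).comp (measurable_id.pow_const k)
  have slln := strong_law_ae_real Y hYint hYpair hYident
  filter_upwards [slln] with ω hω
  have := det_windowed (fun i => X i ω ^ k) (∫ ω', (X 0 ω') ^ k ∂μ) h T hh hhT hω
  simpa [windowedMoment] using this
end

section
/- Let (X_i)_{i≥1} be i.i.d. real random variables with E[X_1^4] < ∞, mean μ, variance σ², and ν² = E[(X_1−μ)^4] − σ^4. Fix reals 0 < h ≤ T − h with T > 0. For n ≥ 1 and t ∈ [h,T] let I_n(t) = {⌊n(t−h)⌋+1, …, ⌊nt⌋}, μ̂_n(t) = (1/(nh)) ∑_{i∈I_n(t)} X_i, σ̂²_n(t) = (1/(nh)) ∑_{i∈I_n(t)} (X_i − μ̂_n(t))², and ν̂²_n(t) = (1/(nh)) ∑_{i∈I_n(t)} (X_i − μ̂_n(t))^4 − (σ̂²_n(t))². Then sup_{t ∈ [h,T]} | σ̂²_n(t) − σ² | → 0 and sup_{t ∈ [h,T]} | ν̂²_n(t)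 − ν² | → 0 almost surely as n → ∞. -/
open MeasureTheory ProbabilityTheory Filter Finset

/-- Index set of the moving window `(t-h, t]` (0-indexed:
`⌊n(t-h)⌋ ≤ i < ⌊nt⌋`). -/
noncomputable def windowIdx (n : ℕ) (h t : ℝ) : Finset ℕ :=
  Finset.Ico ⌊(n : ℝ) * (t - h)⌋₊ ⌊(n : ℝ) * t⌋₊

/-- Windowed empirical mean `μ̂_n(t) = (1/(nh)) ∑_{i ∈ I_n(t)} X_i`. -/
noncomputable def wMean (n : ℕ) (h t : ℝ) (x : ℕ → ℝ) : ℝ :=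
  (∑ i ∈ windowIdx n h t, x i) / ((n : ℝ) * h)

/-- Windowed empirical variance
`σ̂²_n(t) = (1/(nh)) ∑_{i ∈ I_n(t)} (X_i - μ̂_n(t))²`. -/
noncomputable def wVar (n : ℕ) (h t : ℝ) (x : ℕ → ℝ) : ℝ :=
  (∑ i ∈ windowIdx n h t, (x i - wMean n h t x) ^ 2) / ((n : ℝ) * h)

/-- Windowed estimator
`ν̂²_n(t) = (1/(nh)) ∑_{i ∈ I_n(t)} (X_i - μ̂_n(t))⁴ - (σ̂²_n(t))²`. -/
noncomputable def wNu2 (n : ℕ) (h t : ℝ) (x : ℕ → ℝ) : ℝ :=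
  (∑ i ∈ windowIdx n h t, (x i - wMean n h t x) ^ 4) / ((n : ℝ) * h)
    - (wVar n h t x) ^ 2


/-- Uniform convergence over `t ∈ [h, T]`. -/
def UnifLim (h T : ℝ) (F : ℕ → ℝ → ℝ) (L : ℝ) : Prop :=
  ∀ ε > (0:ℝ), ∀ᶠ n : ℕ in atTop, ∀ t ∈ Set.Icc h T, |F n t - L| ≤ ε

namespace UnifLim

variable {h T : ℝ} {F G : ℕ → ℝ → ℝ} {L M : ℝ}

lemma const (h T : ℝ) (c : ℝ) : UnifLim h T (fun _ _ => c) c := by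
  intro ε hε
  filter_upwards with n t _
  simp [le_of_lt hε]

lemma add (hF : UnifLim h T F L) (hG : UnifLim h T G M) :
    UnifLim h T (fun n t => F n t + G n t) (L + M) := by
  intro ε hε
  filter_upwards [hF (ε/2) (by positivity), hG (ε/2) (by positivity)] with n h1 h2 t ht
  have e : F n t + G n t - (L + M) = (F n t - L) + (G n t - M) := by ring
  rw [e]
  calc |(F n t - L) + (G n t - M)| ≤ |F n t - L| + |G n t - M| := abs_add_le _ _
    _ ≤ ε := by linarith [h1 t ht, h2 t ht]

lemma neg (hF : UnifLim h T F L) : UnifLim h T (fun n t => -F n t) (-L) := by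
  intro ε hε
  filter_upwards [hF ε hε] with n h1 t ht
  have e : -F n t - -L = -(F n t - L) := by ring
  rw [e, abs_neg]; exact h1 t ht

lemma sub (hF : UnifLim h T F L) (hG : UnifLim h T G M) :
    UnifLim h T (fun n t => F n t - G n t) (L - M) := by
  have := hF.add hG.neg
  simpa [sub_eq_add_neg] using this

lemma mul (hF : UnifLim h T F L) (hG : UnifLim h T G M) :
    UnifLim h T (fun n t => F n t * G n t) (L * M) := by
  intro ε hε
  have hden : (0:ℝ) < |L| + |M| + 1 := by positivity
  set δ : ℝ := min 1 (ε / (|L| + |M| + 1)) with hδdef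
  have hδ : 0 < δ := lt_min one_pos (by positivity)
  filter_upwards [hF δ hδ, hG δ hδ] with n h1 h2 t ht
  have e1 := h1 t ht
  have e2 := h2 t ht
  have hδ1 : δ ≤ 1 := min_le_left _ _
  have hδ2 : δ ≤ ε / (|L| + |M| + 1) := min_le_right _ _
  have hδ2' : δ * (|L| + |M| + 1) ≤ ε := by
    rw [← le_div_iff₀ hden] at *; exact hδ2
  have hFb : |F n t| ≤ |L| + 1 := by
    have := abs_sub_abs_le_abs_sub (F n t) L
    linarith
  have e3 : F n t * G n t - L * M = F n t * (G n t - M) + M * (F n t - L) := by ring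
  rw [e3]
  calc |F n t * (G n t - M) + M * (F n t - L)|
      ≤ |F n t * (G n t - M)| + |M * (F n t - L)| := abs_add_le _ _
    _ = |F n t| * |G n t - M| + |M| * |F n t - L| := by rw [abs_mul, abs_mul]
    _ ≤ (|L| + 1) * δ + |M| * δ :=
        add_le_add (mul_le_mul hFb e2 (abs_nonneg _) (by positivity))
          (mul_le_mul_of_nonneg_left e1 (abs_nonneg _))
    _ = δ * (|L| + |M| + 1) := by ring
    _ ≤ ε := hδ2'

lemma congr (hFG : ∀ n t, t ∈ Set.Icc h T → F n t = G n t) (hF : UnifLim h T F L) :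
    UnifLim h T G L := by
  intro ε hε
  filter_upwards [hF ε hε] with n h1 t ht
  rw [← hFG n t ht]; exact h1 t ht

end UnifLim

/-- From uniform convergence, the supremum tends to zero. -/
lemma UnifLim.tendsto_sup {h T : ℝ} {F : ℕ → ℝ → ℝ} {L : ℝ}
    (hU : UnifLim h T F L) :
    Tendsto (fun n : ℕ => ⨆ t : Set.Icc h T, |F n (t : ℝ) - L|) atTop (nhds 0) := by
  rw [NormedAddCommGroup.tendsto_nhds_zero]
  intro ε hε
  filter_upwards [hU (ε/2) (by positivity)] with n hn
  have h1 : (⨆ t : Set.Icc h T, |F n (t : ℝ) - L|) ≤ ε/2 :=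
    Real.iSup_le (fun t => hn t t.2) (by positivity)
  have h0 : (0:ℝ) ≤ ⨆ t : Set.Icc h T, |F n (t : ℝ) - L| :=
    Real.iSup_nonneg (fun t => abs_nonneg _)
  rw [Real.norm_eq_abs, abs_of_nonneg h0]
  linarith

/-- Key deterministic lemma: if partial-sum averages converge, the window averages
converge uniformly. -/
lemma window_unifLim {h T : ℝ} (hh : 0 < h) (hT : 0 < T) (a : ℕ → ℝ) (L : ℝ)
    (hS : Tendsto (fun k : ℕ => (∑ i ∈ Finset.range k, a i) / k) atTop (nhds L)) :
    UnifLim h T (fun n t => (∑ i ∈ windowIdx n h t, a i) / ((n : ℝ) * h)) L := by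
  set S : ℕ → ℝ := fun k => ∑ i ∈ Finset.range k, a i with hSdef
  -- Step 1
  have key : ∀ ε > (0:ℝ), ∀ᶠ n : ℕ in atTop,
      ∀ k ≤ ⌊(n : ℝ) * T⌋₊, |S k - k * L| ≤ ε * n := by
    intro ε hε
    have h0 : Tendsto (fun k : ℕ => (S k - k * L) / k) atTop (nhds 0) := by
      have h1 := hS.sub (tendsto_const_nhds (x := L))
      rw [sub_self] at h1
      apply h1.congr'
      filter_upwards [eventually_ge_atTop 1] with k hk
      have hk0 : (k:ℝ) ≠ 0 := Nat.cast_ne_zero.mpr (by omega)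
      field_simp
      rfl
    set δ : ℝ := ε / (T + 1) with hδdef
    have hδ : 0 < δ := by positivity
    obtain ⟨K, hK⟩ := (Metric.tendsto_atTop.mp h0) δ hδ
    set K' := max K 1 with hK'def
    set C : ℝ := ∑ j ∈ Finset.range K', |S j - j * L| with hCdef
    have hC : ∀ k < K', |S k - k * L| ≤ C := by
      intro k hk
      exact Finset.single_le_sum (f := fun j => |S j - j * L|)
        (fun j _ => abs_nonneg _) (Finset.mem_range.mpr hk)
    have hev : ∀ᶠ n : ℕ in atTop, C ≤ (n : ℝ) * ε := by
      have := (tendsto_natCast_atTop_atTop (R := ℝ)).atTop_mul_const hε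
      exact this.eventually_ge_atTop C
    filter_upwards [hev] with n hn k hk
    rcases lt_or_ge k K' with hkK | hkK
    · calc |S k - k * L| ≤ C := hC k hkK
        _ ≤ (n:ℝ) * ε := hn
        _ = ε * n := by ring
    · have hk1 : 1 ≤ k := le_trans (le_max_right K 1) hkK
      have hkdist := hK k (le_trans (le_max_left K 1) hkK)
      rw [Real.dist_eq, sub_zero] at hkdist
      have hk0 : (0:ℝ) < k := by exact_mod_cast hk1
      have h2 : |S k - k * L| < δ * k := by
        rw [abs_div, abs_of_pos hk0] at hkdist
        calc |S k - k * L| = |S k - k * L| / k * k := by field_simp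
          _ < δ * k := by exact mul_lt_mul_of_pos_right hkdist hk0
      have h3 : (k:ℝ) ≤ (n:ℝ) * T := by
        calc (k:ℝ) ≤ (⌊(n:ℝ) * T⌋₊ : ℝ) := by exact_mod_cast hk
          _ ≤ (n:ℝ) * T := Nat.floor_le (by positivity)
      have h4 : δ * k ≤ ε * n := by
        rw [hδdef]
        rw [div_mul_eq_mul_div, div_le_iff₀ (by linarith : (0:ℝ) < T + 1)]
        have hn0 : (0:ℝ) ≤ n := Nat.cast_nonneg n
        nlinarith
      linarith
  -- Step 2
  intro ε hε
  have hev2 : ∀ᶠ n : ℕ in atTop, |L| ≤ (n : ℝ) * ((ε/2) * h) := by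
    have := (tendsto_natCast_atTop_atTop (R := ℝ)).atTop_mul_const
      (by positivity : (0:ℝ) < (ε/2) * h)
    exact this.eventually_ge_atTop |L|
  filter_upwards [key ((ε * h)/4) (by positivity), hev2, eventually_ge_atTop 1]
    with n hkey hL hn1 t ht
  obtain ⟨hth, htT⟩ := ht
  have hn0 : (0:ℝ) < n := by exact_mod_cast hn1
  have hnh : (0:ℝ) < (n:ℝ) * h := by positivity
  set A := ⌊(n : ℝ) * (t - h)⌋₊ with hAdef
  set B := ⌊(n : ℝ) * t⌋₊ with hBdef
  have hth0 : 0 ≤ t - h := by linarith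
  have ht0 : 0 ≤ t := by linarith
  have hAB : A ≤ B := Nat.floor_le_floor (by nlinarith)
  have hsum : ∑ i ∈ windowIdx n h t, a i = S B - S A := by
    rw [windowIdx, Finset.sum_Ico_eq_sub _ hAB]
  have hB1 : (B:ℝ) ≤ (n:ℝ) * t := Nat.floor_le (by positivity)
  have hB2 : (n:ℝ) * t - 1 < B := Nat.sub_one_lt_floor _
  have hA1 : (A:ℝ) ≤ (n:ℝ) * (t - h) := Nat.floor_le (by positivity)
  have hA2 : (n:ℝ) * (t - h) - 1 < A := Nat.sub_one_lt_floor _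
  have hBT : B ≤ ⌊(n : ℝ) * T⌋₊ := Nat.floor_le_floor (by nlinarith)
  have hAT : A ≤ ⌊(n : ℝ) * T⌋₊ := le_trans hAB hBT
  have EB := hkey B hBT
  have EA := hkey A hAT
  have hexp : (n:ℝ) * (t - h) = (n:ℝ) * t - (n:ℝ) * h := by ring
  have hcount : |((B:ℝ) - A) - (n:ℝ) * h| ≤ 1 := by
    rw [abs_le]; constructor <;> [linarith; linarith]
  have hiden : (∑ i ∈ windowIdx n h t, a i) / ((n:ℝ) * h) - L
      = ((S B - B * L) - (S A - A * L) + (((B:ℝ) - A) - (n:ℝ) * h) * L) / ((n:ℝ) * h) := by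
    rw [hsum]; field_simp; ring
  rw [hiden]
  rw [abs_div, abs_of_pos hnh, div_le_iff₀ hnh]
  have tri : |(S B - B * L) - (S A - A * L) + (((B:ℝ) - A) - (n:ℝ) * h) * L|
      ≤ |S B - B * L| + |S A - A * L| + |((B:ℝ) - A) - (n:ℝ) * h| * |L| := by
    calc |(S B - B * L) - (S A - A * L) + (((B:ℝ) - A) - (n:ℝ) * h) * L|
        ≤ |(S B - B * L) - (S A - A * L)| + |(((B:ℝ) - A) - (n:ℝ) * h) * L| := abs_add_le _ _
      _ ≤ |S B - B * L| + |S A - A * L| + |((B:ℝ) - A) - (n:ℝ) * h| * |L| := by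
          rw [abs_mul]
          exact add_le_add_left (abs_sub _ _) _
  have habs : |((B:ℝ) - A) - (n:ℝ) * h| * |L| ≤ |L| := by
    calc |((B:ℝ) - A) - (n:ℝ) * h| * |L| ≤ 1 * |L| :=
      mul_le_mul_of_nonneg_right hcount (abs_nonneg _)
      _ = |L| := one_mul _
  have hLn : |L| ≤ (ε/2) * ((n:ℝ) * h) := by nlinarith [hL]
  nlinarith [tri, EB, EA, habs, hLn]

lemma sum_sub_sq (x : ℕ → ℝ) (c : ℝ) (s : Finset ℕ) :
    ∑ i ∈ s, (x i - c) ^ 2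
      = ∑ i ∈ s, x i ^ 2 - 2 * c * ∑ i ∈ s, x i ^ 1 + c ^ 2 * ∑ i ∈ s, x i ^ 0 := by
  have e : ∀ i ∈ s, (x i - c) ^ 2
      = x i ^ 2 - 2 * c * x i ^ 1 + c ^ 2 * x i ^ 0 := fun i _ => by ring
  rw [Finset.sum_congr rfl e]
  simp only [Finset.sum_add_distrib, Finset.sum_sub_distrib, ← Finset.mul_sum]

lemma sum_sub_quart (x : ℕ → ℝ) (c : ℝ) (s : Finset ℕ) :
    ∑ i ∈ s, (x i - c) ^ 4
      = ∑ i ∈ s, x i ^ 4 - 4 * c * ∑ i ∈ s, x i ^ 3 + 6 * c ^ 2 * ∑ i ∈ s, x i ^ 2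
        - 4 * c ^ 3 * ∑ i ∈ s, x i ^ 1 + c ^ 4 * ∑ i ∈ s, x i ^ 0 := by
  have e : ∀ i ∈ s, (x i - c) ^ 4
      = x i ^ 4 - 4 * c * x i ^ 3 + 6 * c ^ 2 * x i ^ 2
        - 4 * c ^ 3 * x i ^ 1 + c ^ 4 * x i ^ 0 := fun i _ => by ring
  rw [Finset.sum_congr rfl e]
  simp only [Finset.sum_add_distrib, Finset.sum_sub_distrib, ← Finset.mul_sum]

/-- For i.i.d. random variables with finite fourth moment, the windowed empirical
variance and the windowed estimator `ν̂²` converge almost surely to `σ²` and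
`ν² = E[(X-μ)⁴] - σ⁴`, uniformly over `t ∈ [h, T]`. -/
theorem windowed_var_nu2_uniform_slln
    {Ω : Type*} [MeasurableSpace Ω] (μ : Measure Ω) [IsProbabilityMeasure μ]
    (X : ℕ → Ω → ℝ)
    (hmeas : ∀ i, Measurable (X i))
    (hindep : iIndepFun X μ)
    (hident : ∀ i, IdentDistrib (X i) (X 0) μ μ)
    (hint4 : Integrable (fun ω => (X 0 ω) ^ 4) μ)
    (h T : ℝ) (hh : 0 < h) (hhT : h ≤ T - h) (hT : 0 < T)
    (m σ2 ν2 : ℝ)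
    (hm : m = ∫ ω, X 0 ω ∂μ)
    (hσ2 : σ2 = ∫ ω, (X 0 ω - m) ^ 2 ∂μ)
    (hν2 : ν2 = (∫ ω, (X 0 ω - m) ^ 4 ∂μ) - σ2 ^ 2) :
    (∀ᵐ ω ∂μ,
      Tendsto
        (fun n : ℕ =>
          ⨆ t : Set.Icc h T, |wVar n h (t : ℝ) (fun i => X i ω) - σ2|)
        atTop (nhds 0)) ∧
    (∀ᵐ ω ∂μ,
      Tendsto
        (fun n : ℕ =>
          ⨆ t : Set.Icc h T, |wNu2 n h (t : ℝ) (fun i => X i ω) - ν2|)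
        atTop (nhds 0)) := by
  have hX0 : Measurable (X 0) := hmeas 0
  -- integrability of all powers up to 4
  have hintp : ∀ j, j ≤ 4 → Integrable (fun ω => X 0 ω ^ j) μ := by
    intro j hj
    refine ((integrable_const (1:ℝ)).add hint4).mono
      ((hX0.pow_const j).aestronglyMeasurable) (ae_of_all _ fun ω => ?_)
    simp only [Real.norm_eq_abs, Pi.add_apply]
    have h4 : (0:ℝ) ≤ X 0 ω ^ 4 := by positivity
    have habs4 : |X 0 ω| ^ 4 = X 0 ω ^ 4 := by
      rw [← abs_pow, abs_of_nonneg h4]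
    have h1 : |1 + X 0 ω ^ 4| = 1 + X 0 ω ^ 4 := abs_of_nonneg (by linarith)
    rw [h1, abs_pow]
    rcases le_or_gt |X 0 ω| 1 with hc | hc
    · have := pow_le_one₀ (abs_nonneg (X 0 ω)) hc (n := j)
      linarith
    · have := pow_le_pow_right₀ hc.le hj
      linarith [habs4]
  -- strong law for each power
  have slln : ∀ j, j ≤ 4 → ∀ᵐ ω ∂μ,
      Tendsto (fun k : ℕ => (∑ i ∈ Finset.range k, X i ω ^ j) / k) atTop
        (nhds (∫ ω, X 0 ω ^ j ∂μ)) := by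
    intro j hj
    have hpair : Pairwise (Function.onFun (IndepFun · · μ) (fun i ω => X i ω ^ j)) := by
      intro i k hik
      exact (hindep.indepFun hik).comp (measurable_id.pow_const j)
        (measurable_id.pow_const j)
    have hid : ∀ i, IdentDistrib (fun ω => X i ω ^ j) (fun ω => X 0 ω ^ j) μ μ :=
      fun i => (hident i).comp (measurable_id.pow_const j)
    exact strong_law_ae_real _ (hintp j hj) hpair hid
  -- moment identities
  have hm1 : (∫ ω, X 0 ω ^ 1 ∂μ) = m := by rw [hm]; simp [pow_one]
  have I1 := hintp 1 (by norm_num)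
  have I2 := hintp 2 (by norm_num)
  have I3 := hintp 3 (by norm_num)
  have I4 := hintp 4 (by norm_num)
  have hmoment2 : σ2 = (∫ ω, X 0 ω ^ 2 ∂μ) - 2 * m * (∫ ω, X 0 ω ^ 1 ∂μ) + m ^ 2 := by
    rw [hσ2]
    have e : (fun ω => (X 0 ω - m) ^ 2)
        = fun ω => X 0 ω ^ 2 - 2 * m * X 0 ω ^ 1 + m ^ 2 := funext fun ω => by ring
    have C1 : Integrable (fun ω' => 2 * m * X 0 ω' ^ 1) μ := I1.const_mul _
    have B1 : Integrable (fun ω' => X 0 ω' ^ 2 - 2 * m * X 0 ω' ^ 1) μ := I2.sub C1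
    rw [e, integral_add B1 (integrable_const _), integral_sub I2 C1,
      integral_const_mul, integral_const]
    simp [measure_univ]
    try ring
  have hmoment4 : (∫ ω, (X 0 ω - m) ^ 4 ∂μ)
      = (∫ ω, X 0 ω ^ 4 ∂μ) - 4 * m * (∫ ω, X 0 ω ^ 3 ∂μ)
        + 6 * m ^ 2 * (∫ ω, X 0 ω ^ 2 ∂μ) - 4 * m ^ 3 * (∫ ω, X 0 ω ^ 1 ∂μ) + m ^ 4 := by
    have e : (fun ω => (X 0 ω - m) ^ 4)
        = fun ω => X 0 ω ^ 4 - 4 * m * X 0 ω ^ 3 + 6 * m ^ 2 * X 0 ω ^ 2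
            - 4 * m ^ 3 * X 0 ω ^ 1 + m ^ 4 := funext fun ω => by ring
    have C3 : Integrable (fun ω' => 4 * m * X 0 ω' ^ 3) μ := I3.const_mul _
    have C2 : Integrable (fun ω' => 6 * m ^ 2 * X 0 ω' ^ 2) μ := I2.const_mul _
    have C1' : Integrable (fun ω' => 4 * m ^ 3 * X 0 ω' ^ 1) μ := I1.const_mul _
    have A1 : Integrable (fun ω' => X 0 ω' ^ 4 - 4 * m * X 0 ω' ^ 3) μ := I4.sub C3
    have A2 : Integrable (fun ω' => X 0 ω' ^ 4 - 4 * m * X 0 ω' ^ 3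
        + 6 * m ^ 2 * X 0 ω' ^ 2) μ := A1.add C2
    have A3 : Integrable (fun ω' => X 0 ω' ^ 4 - 4 * m * X 0 ω' ^ 3
        + 6 * m ^ 2 * X 0 ω' ^ 2 - 4 * m ^ 3 * X 0 ω' ^ 1) μ := A2.sub C1'
    rw [e, integral_add A3 (integrable_const _), integral_sub A2 C1',
      integral_add A1 C2, integral_sub I4 C3,
      integral_const_mul, integral_const_mul, integral_const_mul, integral_const]
    simp [measure_univ]
    try ring
  -- the almost sure set
  have main : ∀ᵐ ω ∂μ,
      (Tendsto (fun n : ℕ =>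
          ⨆ t : Set.Icc h T, |wVar n h (t : ℝ) (fun i => X i ω) - σ2|) atTop (nhds 0)) ∧
      (Tendsto (fun n : ℕ =>
          ⨆ t : Set.Icc h T, |wNu2 n h (t : ℝ) (fun i => X i ω) - ν2|) atTop (nhds 0)) := by
    filter_upwards [slln 1 (by norm_num), slln 2 (by norm_num), slln 3 (by norm_num),
      slln 4 (by norm_num)] with ω s1 s2 s3 s4
    set x : ℕ → ℝ := fun i => X i ω with hxdef
    set P0 : ℕ → ℝ → ℝ := fun n t => (∑ i ∈ windowIdx n h t, x i ^ 0) / ((n:ℝ) * h) with hP0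
    set P1 : ℕ → ℝ → ℝ := fun n t => (∑ i ∈ windowIdx n h t, x i ^ 1) / ((n:ℝ) * h) with hP1
    set P2 : ℕ → ℝ → ℝ := fun n t => (∑ i ∈ windowIdx n h t, x i ^ 2) / ((n:ℝ) * h) with hP2
    set P3 : ℕ → ℝ → ℝ := fun n t => (∑ i ∈ windowIdx n h t, x i ^ 3) / ((n:ℝ) * h) with hP3
    set P4 : ℕ → ℝ → ℝ := fun n t => (∑ i ∈ windowIdx n h t, x i ^ 4) / ((n:ℝ) * h) with hP4
    have hU0 : UnifLim h T P0 1 := by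
      apply window_unifLim hh hT
      refine tendsto_const_nhds.congr' ?_
      filter_upwards [eventually_ge_atTop 1] with k hk
      have hk0 : (k:ℝ) ≠ 0 := Nat.cast_ne_zero.mpr (by omega)
      simp [Finset.sum_const, hk0]
    have hU1 : UnifLim h T P1 (∫ ω', X 0 ω' ^ 1 ∂μ) := window_unifLim hh hT _ _ s1
    have hU2 : UnifLim h T P2 (∫ ω', X 0 ω' ^ 2 ∂μ) := window_unifLim hh hT _ _ s2
    have hU3 : UnifLim h T P3 (∫ ω', X 0 ω' ^ 3 ∂μ) := window_unifLim hh hT _ _ s3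
    have hU4 : UnifLim h T P4 (∫ ω', X 0 ω' ^ 4 ∂μ) := window_unifLim hh hT _ _ s4
    have hMean : ∀ n t, wMean n h t x = P1 n t := by
      intro n t; simp only [hP1, wMean, pow_one]
    have hVarEq : ∀ n t, wVar n h t x
        = P2 n t - 2 * (P1 n t * P1 n t) + P1 n t * P1 n t * P0 n t := by
      intro n t
      rw [wVar, sum_sub_sq, hMean n t]
      simp only [hP0, hP1, hP2]
      ring
    have hQuartEq : ∀ n t,
        (∑ i ∈ windowIdx n h t, (x i - wMean n h t x) ^ 4) / ((n:ℝ) * h)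
        = P4 n t - 4 * (P1 n t * P3 n t) + 6 * (P1 n t * P1 n t * P2 n t)
          - 4 * (P1 n t * P1 n t * P1 n t * P1 n t)
          + P1 n t * P1 n t * P1 n t * P1 n t * P0 n t := by
      intro n t
      rw [sum_sub_quart, hMean n t]
      simp only [hP0, hP1, hP2, hP3, hP4]
      ring
    -- uniform limits of the assembled expressions
    have hVb : UnifLim h T
        (fun n t => P2 n t - 2 * (P1 n t * P1 n t) + P1 n t * P1 n t * P0 n t)
        ((∫ ω', X 0 ω' ^ 2 ∂μ)
          - 2 * ((∫ ω', X 0 ω' ^ 1 ∂μ) * (∫ ω', X 0 ω' ^ 1 ∂μ))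
          + (∫ ω', X 0 ω' ^ 1 ∂μ) * (∫ ω', X 0 ω' ^ 1 ∂μ) * 1) :=
      (hU2.sub ((UnifLim.const h T 2).mul (hU1.mul hU1))).add ((hU1.mul hU1).mul hU0)
    have hvalV : (∫ ω', X 0 ω' ^ 2 ∂μ)
          - 2 * ((∫ ω', X 0 ω' ^ 1 ∂μ) * (∫ ω', X 0 ω' ^ 1 ∂μ))
          + (∫ ω', X 0 ω' ^ 1 ∂μ) * (∫ ω', X 0 ω' ^ 1 ∂μ) * 1 = σ2 := by
      rw [hm1, hmoment2, hm1]; ring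
    rw [hvalV] at hVb
    have hVarU : UnifLim h T (fun n t => wVar n h t x) σ2 :=
      UnifLim.congr (fun n t _ => (hVarEq n t).symm) hVb
    have hQb : UnifLim h T
        (fun n t => P4 n t - 4 * (P1 n t * P3 n t) + 6 * (P1 n t * P1 n t * P2 n t)
          - 4 * (P1 n t * P1 n t * P1 n t * P1 n t)
          + P1 n t * P1 n t * P1 n t * P1 n t * P0 n t)
        ((∫ ω', X 0 ω' ^ 4 ∂μ)
          - 4 * ((∫ ω', X 0 ω' ^ 1 ∂μ) * (∫ ω', X 0 ω' ^ 3 ∂μ))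
          + 6 * ((∫ ω', X 0 ω' ^ 1 ∂μ) * (∫ ω', X 0 ω' ^ 1 ∂μ) * (∫ ω', X 0 ω' ^ 2 ∂μ))
          - 4 * ((∫ ω', X 0 ω' ^ 1 ∂μ) * (∫ ω', X 0 ω' ^ 1 ∂μ) * (∫ ω', X 0 ω' ^ 1 ∂μ)
              * (∫ ω', X 0 ω' ^ 1 ∂μ))
          + (∫ ω', X 0 ω' ^ 1 ∂μ) * (∫ ω', X 0 ω' ^ 1 ∂μ) * (∫ ω', X 0 ω' ^ 1 ∂μ)
              * (∫ ω', X 0 ω' ^ 1 ∂μ) * 1) :=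
      ((((hU4.sub ((UnifLim.const h T 4).mul (hU1.mul hU3))).add
          ((UnifLim.const h T 6).mul ((hU1.mul hU1).mul hU2))).sub
          ((UnifLim.const h T 4).mul (((hU1.mul hU1).mul hU1).mul hU1))).add
          ((((hU1.mul hU1).mul hU1).mul hU1).mul hU0))
    have hvalQ : (∫ ω', X 0 ω' ^ 4 ∂μ)
          - 4 * ((∫ ω', X 0 ω' ^ 1 ∂μ) * (∫ ω', X 0 ω' ^ 3 ∂μ))
          + 6 * ((∫ ω', X 0 ω' ^ 1 ∂μ) * (∫ ω', X 0 ω' ^ 1 ∂μ) * (∫ ω', X 0 ω' ^ 2 ∂μ))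
          - 4 * ((∫ ω', X 0 ω' ^ 1 ∂μ) * (∫ ω', X 0 ω' ^ 1 ∂μ) * (∫ ω', X 0 ω' ^ 1 ∂μ)
              * (∫ ω', X 0 ω' ^ 1 ∂μ))
          + (∫ ω', X 0 ω' ^ 1 ∂μ) * (∫ ω', X 0 ω' ^ 1 ∂μ) * (∫ ω', X 0 ω' ^ 1 ∂μ)
              * (∫ ω', X 0 ω' ^ 1 ∂μ) * 1
        = ∫ ω', (X 0 ω' - m) ^ 4 ∂μ := by
      rw [hm1, hmoment4, hm1]; ring
    rw [hvalQ] at hQb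
    have hNub : UnifLim h T
        (fun n t => (P4 n t - 4 * (P1 n t * P3 n t) + 6 * (P1 n t * P1 n t * P2 n t)
          - 4 * (P1 n t * P1 n t * P1 n t * P1 n t)
          + P1 n t * P1 n t * P1 n t * P1 n t * P0 n t)
          - wVar n h t x * wVar n h t x)
        ((∫ ω', (X 0 ω' - m) ^ 4 ∂μ) - σ2 * σ2) := hQb.sub (hVarU.mul hVarU)
    have hvalN : (∫ ω', (X 0 ω' - m) ^ 4 ∂μ) - σ2 * σ2 = ν2 := by
      rw [hν2]; ring
    rw [hvalN] at hNub
    have hNuU : UnifLim h T (fun n t => wNu2 n h t x) ν2 := by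
      refine UnifLim.congr (fun n t _ => ?_) hNub
      rw [wNu2, hQuartEq n t, hVarEq n t]
      ring
    exact ⟨hVarU.tendsto_sup, hNuU.tendsto_sup⟩
  exact ⟨main.mono fun ω hω => hω.1, main.mono fun ω hω => hω.2⟩
end

section
/- Let (X_i)_{i≥1} be i.i.d. real random variables with E[X_1^4] < ∞, σ² = Var(X_1) > 0, ν² = Var((X_1−μ)²) > 0 where μ = E[X_1], and ρ = E[(X_1−μ)³]/(σν). Fix reals 0 < h and T ≥ 2h. For n ≥ 1 and t ∈ [h, T−h] let I_ℓ = {⌊n(t−h)⌋+1,…,⌊nt⌋} and I_r = {⌊nt⌋+1,…,⌊n(t+h)⌋}, and for j ∈ {ℓ,r} define μ̂_j = (1/(nh))∑_{i∈I_j} X_i, σ̂²_j = (1/(nh))∑_{i∈I_j}(X_i−μ̂_j)², μ̂^{{3}}_j = (1/(nh))∑_{i∈I_j}(X_i−μ̂_j)³, and ν̂²_j = (1/(nh))∑_{i∈I_j}(X_i−μ̂_j)^4 − (σ̂²_j)². Define ρ̂_n(t) = (μ̂^{{3}}_r + μ̂^{{3}}_ℓ)/((σ̂²_r + σ̂²_ℓ)^{1/2}·(ν̂²_r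 + ν̂²_ℓ)^{1/2}). Then sup_{t ∈ [h,T−h]} | ρ̂_n(t) − ρ | → 0 almost surely as n → ∞. -/
open MeasureTheory ProbabilityTheory Filter Finset

/-- Index set corresponding to the time window `(a, b]` (0-indexed:
`⌊na⌋ ≤ i < ⌊nb⌋`). -/
noncomputable def winIdx (n : ℕ) (a b : ℝ) : Finset ℕ :=
  Finset.Ico ⌊(n : ℝ) * a⌋₊ ⌊(n : ℝ) * b⌋₊

/-- Empirical mean over the window `(a, b]`, normalized by `nh`. -/
noncomputable def winMean (n : ℕ) (h a b : ℝ) (x : ℕ → ℝ) : ℝ :=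
  (∑ i ∈ winIdx n a b, x i) / ((n : ℝ) * h)

/-- Empirical `k`-th central moment over the window `(a, b]`, normalized by `nh`. -/
noncomputable def winCM (n : ℕ) (h a b : ℝ) (k : ℕ) (x : ℕ → ℝ) : ℝ :=
  (∑ i ∈ winIdx n a b, (x i - winMean n h a b x) ^ k) / ((n : ℝ) * h)

/-- Empirical `ν̂²` over the window `(a, b]`. -/
noncomputable def winNu2 (n : ℕ) (h a b : ℝ) (x : ℕ → ℝ) : ℝ :=
  winCM n h a b 4 x - (winCM n h a b 2 x) ^ 2

/-- The local correlation estimator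
`ρ̂_n(t) = (μ̂³_r + μ̂³_ℓ) / (√(σ̂²_r + σ̂²_ℓ) · √(ν̂²_r + ν̂²_ℓ))`, where the
left window is `(t-h, t]` and the right window is `(t, t+h]`. -/
noncomputable def rhoHat (n : ℕ) (h t : ℝ) (x : ℕ → ℝ) : ℝ :=
  (winCM n h t (t + h) 3 x + winCM n h (t - h) t 3 x) /
    (Real.sqrt (winCM n h t (t + h) 2 x + winCM n h (t - h) t 2 x) *
      Real.sqrt (winNu2 n h t (t + h) x + winNu2 n h (t - h) t x))

/- auxiliary -/
noncomputable def wB (n : ℕ) (h a b m : ℝ) (x : ℕ → ℝ) (p : ℕ) : ℝ :=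
  (∑ i ∈ winIdx n a b, (x i - m) ^ p) / ((n : ℝ) * h)
noncomputable def wc (n : ℕ) (h a b : ℝ) : ℝ :=
  ((winIdx n a b).card : ℝ) / ((n : ℝ) * h)

def gd (m B1 c : ℝ) : ℝ := B1 + m * (c - 1)
def g2 (m B1 B2 c : ℝ) : ℝ := B2 - 2 * gd m B1 c * B1 + (gd m B1 c) ^ 2 * c
def g3 (m B1 B2 B3 c : ℝ) : ℝ :=
  B3 - 3 * gd m B1 c * B2 + 3 * (gd m B1 c) ^ 2 * B1 - (gd m B1 c) ^ 3 * c
def g4 (m B1 B2 B3 B4 c : ℝ) : ℝ :=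
  B4 - 4 * gd m B1 c * B3 + 6 * (gd m B1 c) ^ 2 * B2 - 4 * (gd m B1 c) ^ 3 * B1
    + (gd m B1 c) ^ 4 * c

lemma sum_sub_pow2 (s : Finset ℕ) (z : ℕ → ℝ) (d : ℝ) :
    ∑ i ∈ s, (z i - d) ^ 2
      = (∑ i ∈ s, (z i) ^ 2) - 2 * d * (∑ i ∈ s, z i) + (s.card : ℝ) * d ^ 2 := by
  induction s using Finset.cons_induction with
  | empty => simp
  | cons a s ha ih => simp only [Finset.sum_cons, Finset.card_cons, Nat.cast_succ, ih]; ring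

lemma sum_sub_pow3 (s : Finset ℕ) (z : ℕ → ℝ) (d : ℝ) :
    ∑ i ∈ s, (z i - d) ^ 3
      = (∑ i ∈ s, (z i) ^ 3) - 3 * d * (∑ i ∈ s, (z i) ^ 2)
        + 3 * d ^ 2 * (∑ i ∈ s, z i) - (s.card : ℝ) * d ^ 3 := by
  induction s using Finset.cons_induction with
  | empty => simp
  | cons a s ha ih => simp only [Finset.sum_cons, Finset.card_cons, Nat.cast_succ, ih]; ring

lemma sum_sub_pow4 (s : Finset ℕ) (z : ℕ → ℝ) (d : ℝ) :
    ∑ i ∈ s, (z i - d) ^ 4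
      = (∑ i ∈ s, (z i) ^ 4) - 4 * d * (∑ i ∈ s, (z i) ^ 3)
        + 6 * d ^ 2 * (∑ i ∈ s, (z i) ^ 2) - 4 * d ^ 3 * (∑ i ∈ s, z i)
        + (s.card : ℝ) * d ^ 4 := by
  induction s using Finset.cons_induction with
  | empty => simp
  | cons a s ha ih => simp only [Finset.sum_cons, Finset.card_cons, Nat.cast_succ, ih]; ring

lemma winMean_split (n : ℕ) (h a b m : ℝ) (x : ℕ → ℝ) :
    winMean n h a b x = wB n h a b m x 1 + m * wc n h a b := by
  unfold winMean wB wc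
  rw [show (∑ i ∈ winIdx n a b, x i)
      = (∑ i ∈ winIdx n a b, (x i - m) ^ 1) + ((winIdx n a b).card : ℝ) * m by
    rw [Finset.sum_congr rfl (fun i _ => show x i = (x i - m) ^ 1 + m by ring),
      Finset.sum_add_distrib, Finset.sum_const, nsmul_eq_mul]]
  ring

lemma winMean_sub (n : ℕ) (h a b m : ℝ) (x : ℕ → ℝ) :
    winMean n h a b x - m = gd m (wB n h a b m x 1) (wc n h a b) := by
  rw [winMean_split n h a b m x, gd]; ring

lemma winCM_two (n : ℕ) (h a b m : ℝ) (x : ℕ → ℝ) :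
    winCM n h a b 2 x
      = g2 m (wB n h a b m x 1) (wB n h a b m x 2) (wc n h a b) := by
  unfold winCM
  rw [Finset.sum_congr rfl (fun i _ => show (x i - winMean n h a b x) ^ 2
      = ((x i - m) - (winMean n h a b x - m)) ^ 2 by ring),
    sum_sub_pow2, winMean_sub n h a b m x]
  simp only [g2, g3, g4, gd, wB, wc, pow_one]
  generalize (∑ i ∈ winIdx n a b, (x i - m) ^ 2) = S2
  generalize (∑ i ∈ winIdx n a b, (x i - m)) = S1
  generalize ((#(winIdx n a b) : ℝ)) = C
  ring


lemma winCM_three (n : ℕ) (h a b m : ℝ) (x : ℕ → ℝ) :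
    winCM n h a b 3 x
      = g3 m (wB n h a b m x 1) (wB n h a b m x 2) (wB n h a b m x 3) (wc n h a b) := by
  unfold winCM
  rw [Finset.sum_congr rfl (fun i _ => show (x i - winMean n h a b x) ^ 3
      = ((x i - m) - (winMean n h a b x - m)) ^ 3 by ring),
    sum_sub_pow3, winMean_sub n h a b m x]
  simp only [g2, g3, g4, gd, wB, wc, pow_one]
  generalize (∑ i ∈ winIdx n a b, (x i - m) ^ 3) = S3
  generalize (∑ i ∈ winIdx n a b, (x i - m) ^ 2) = S2
  generalize (∑ i ∈ winIdx n a b, (x i - m)) = S1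
  generalize ((#(winIdx n a b) : ℝ)) = C
  ring


lemma winCM_four (n : ℕ) (h a b m : ℝ) (x : ℕ → ℝ) :
    winCM n h a b 4 x
      = g4 m (wB n h a b m x 1) (wB n h a b m x 2) (wB n h a b m x 3)
          (wB n h a b m x 4) (wc n h a b) := by
  unfold winCM
  rw [Finset.sum_congr rfl (fun i _ => show (x i - winMean n h a b x) ^ 4
      = ((x i - m) - (winMean n h a b x - m)) ^ 4 by ring),
    sum_sub_pow4, winMean_sub n h a b m x]
  simp only [g2, g3, g4, gd, wB, wc, pow_one]
  generalize (∑ i ∈ winIdx n a b, (x i - m) ^ 4) = S4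
  generalize (∑ i ∈ winIdx n a b, (x i - m) ^ 3) = S3
  generalize (∑ i ∈ winIdx n a b, (x i - m) ^ 2) = S2
  generalize (∑ i ∈ winIdx n a b, (x i - m)) = S1
  generalize ((#(winIdx n a b) : ℝ)) = C
  ring

noncomputable def maxAbs (e : ℕ → ℝ) (N : ℕ) : ℝ :=
  (Finset.range (N + 1)).sup' Finset.nonempty_range_add_one (fun k => |e k|)

lemma le_maxAbs (e : ℕ → ℝ) {k N : ℕ} (hk : k ≤ N) : |e k| ≤ maxAbs e N := by
  unfold maxAbs
  exact Finset.le_sup' (fun k => |e k|) (Finset.mem_range.2 (Nat.lt_succ_of_le hk))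

lemma maxAbs_nonneg (e : ℕ → ℝ) (N : ℕ) : 0 ≤ maxAbs e N :=
  le_trans (abs_nonneg (e 0)) (le_maxAbs e (Nat.zero_le N))

lemma maxAbs_tendsto (e : ℕ → ℝ) (he : Tendsto (fun k => e k / k) atTop (nhds 0))
    (T : ℝ) (hT : 0 < T) :
    Tendsto (fun n : ℕ => maxAbs e ⌊(n : ℝ) * T⌋₊ / n) atTop (nhds 0) := by
  rw [Metric.tendsto_atTop]
  intro ε hε
  have hδ : 0 < ε / (2 * (T + 1)) := by positivity
  obtain ⟨K, hK⟩ := (Metric.tendsto_atTop.1 he) (ε / (2 * (T + 1))) hδ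
  set C := maxAbs e K with hC
  obtain ⟨N1, hN1⟩ := exists_nat_gt (2 * C / ε)
  refine ⟨max (N1 + 1) 1, fun n hn => ?_⟩
  have hn1 : 1 ≤ n := le_trans (le_max_right _ _) hn
  have hnN1 : (N1 : ℝ) < n := by
    have : N1 + 1 ≤ n := le_trans (le_max_left _ _) hn
    exact_mod_cast Nat.lt_of_lt_of_le (Nat.lt_succ_self N1) this
  have hnpos : (0 : ℝ) < n := by exact_mod_cast hn1
  have key : maxAbs e ⌊(n : ℝ) * T⌋₊ ≤ max C (ε / (2 * (T + 1)) * ((n : ℝ) * T)) := by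
    apply Finset.sup'_le
    intro k hk
    rcases le_or_gt k K with h1 | h1
    · exact le_max_of_le_left (le_maxAbs e h1)
    · refine le_max_of_le_right ?_
      have hkK : K ≤ k := h1.le
      have := hK k hkK
      rw [Real.dist_eq, sub_zero] at this
      have hkpos : (0 : ℝ) < k := by
        exact_mod_cast Nat.lt_of_le_of_lt (Nat.zero_le K) h1
      have h2 : |e k| < ε / (2 * (T + 1)) * k := by
        rw [abs_div, abs_of_pos hkpos] at this
        calc |e k| = |e k| / k * k := by field_simp
        _ < ε / (2 * (T + 1)) * k := by
          exact mul_lt_mul_of_pos_right this hkpos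
      refine h2.le.trans (mul_le_mul_of_nonneg_left ?_ hδ.le)
      have : (k : ℝ) ≤ ⌊(n : ℝ) * T⌋₊ := by
        exact_mod_cast Finset.mem_range.1 hk |> Nat.lt_succ_iff.1
      exact this.trans (Nat.floor_le (by positivity))
  have h0 : 0 ≤ maxAbs e ⌊(n : ℝ) * T⌋₊ / n := div_nonneg (maxAbs_nonneg _ _) hnpos.le
  rw [Real.dist_eq, sub_zero, abs_of_nonneg h0]
  calc maxAbs e ⌊(n : ℝ) * T⌋₊ / n
      ≤ max C (ε / (2 * (T + 1)) * ((n : ℝ) * T)) / n := by gcongr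
    _ < ε := by
        rw [div_lt_iff₀ hnpos, max_lt_iff]
        have hC0 : 0 ≤ C := maxAbs_nonneg e K
        have h2C : 2 * C < (n : ℝ) * ε := (div_lt_iff₀ hε).1 (hN1.trans hnN1)
        have hδ2 : ε / (2 * (T + 1)) * (2 * (T + 1)) = ε := by
          field_simp
        constructor
        · linarith
        · nlinarith [mul_pos hδ hnpos, hT, hnpos]

lemma window_bound (y : ℕ → ℝ) (L h T : ℝ) (hh : 0 < h) (hT : 0 < T)
    (hconv : Tendsto (fun k : ℕ => (∑ i ∈ Finset.range k, y i) / k) atTop (nhds L)) :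
    ∃ ε : ℕ → ℝ, Tendsto ε atTop (nhds 0) ∧
      ∀ n : ℕ, 1 ≤ n → ∀ a b : ℝ, 0 ≤ a → b = a + h → b ≤ T →
        |(∑ i ∈ winIdx n a b, y i) / ((n : ℝ) * h) - L| ≤ ε n := by
  set e : ℕ → ℝ := fun k => (∑ i ∈ Finset.range k, y i) - L * k with he
  have hetend : Tendsto (fun k => e k / k) atTop (nhds 0) := by
    have h1 : ∀ᶠ k : ℕ in atTop, e k / k = (∑ i ∈ Finset.range k, y i) / k - L := by
      filter_upwards [eventually_ge_atTop 1] with k hk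
      have : (k : ℝ) ≠ 0 := by positivity
      rw [he]
      field_simp
    rw [tendsto_congr' h1]
    simpa using hconv.sub (tendsto_const_nhds (x := L))
  refine ⟨fun n : ℕ => (2 * maxAbs e ⌊(n : ℝ) * T⌋₊ + |L|) / ((n : ℝ) * h), ?_, ?_⟩
  · -- the epsilon sequence tends to 0
    have h1 := maxAbs_tendsto e hetend T hT
    have h2 : Tendsto (fun n : ℕ => (|L| / h) * (n : ℝ)⁻¹) atTop (nhds 0) := by
      simpa using (tendsto_natCast_atTop_atTop (R := ℝ)).inv_tendsto_atTop.const_mul (|L| / h)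
    have h3 := ((h1.const_mul (2 / h)).add h2)
    rw [add_zero, mul_zero] at h3
    refine h3.congr (fun n => ?_)
    ring
  · intro n hn a b ha hb hbT
    have hna : (0 : ℝ) ≤ (n : ℝ) * a := by positivity
    have hnb0 : (0 : ℝ) ≤ (n : ℝ) * b := by nlinarith
    have hfl : ⌊(n : ℝ) * a⌋₊ ≤ ⌊(n : ℝ) * b⌋₊ :=
      Nat.floor_le_floor (by nlinarith)
    have hsum : ∑ i ∈ winIdx n a b, y i
        = (∑ i ∈ Finset.range ⌊(n : ℝ) * b⌋₊, y i)
          - (∑ i ∈ Finset.range ⌊(n : ℝ) * a⌋₊, y i) := by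
      rw [winIdx, Finset.sum_Ico_eq_sub _ hfl]
    set A := ⌊(n : ℝ) * a⌋₊
    set B := ⌊(n : ℝ) * b⌋₊
    set M := maxAbs e ⌊(n : ℝ) * T⌋₊ with hM
    have hBT : B ≤ ⌊(n : ℝ) * T⌋₊ := Nat.floor_le_floor (by nlinarith)
    have hAT : A ≤ ⌊(n : ℝ) * T⌋₊ := le_trans hfl hBT
    have heA : |e A| ≤ M := le_maxAbs e hAT
    have heB : |e B| ≤ M := le_maxAbs e hBT
    have hfa1 : (A : ℝ) ≤ (n : ℝ) * a := Nat.floor_le hna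
    have hfa2 : (n : ℝ) * a < A + 1 := Nat.lt_floor_add_one _
    have hfb1 : (B : ℝ) ≤ (n : ℝ) * b := Nat.floor_le hnb0
    have hfb2 : (n : ℝ) * b < B + 1 := Nat.lt_floor_add_one _
    have hdiff : |(B : ℝ) - (A : ℝ) - (n : ℝ) * h| ≤ 1 := by
      rw [abs_le]
      constructor <;> nlinarith [hb]
    have hnh : (0 : ℝ) < (n : ℝ) * h := by
      have : (0:ℝ) < n := by exact_mod_cast hn
      positivity
    have hnum : |(∑ i ∈ winIdx n a b, y i) - L * ((n : ℝ) * h)| ≤ 2 * M + |L| := by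
      have hid : (∑ i ∈ winIdx n a b, y i) - L * ((n : ℝ) * h)
          = e B - e A + L * ((B : ℝ) - (A : ℝ) - (n : ℝ) * h) := by
        rw [hsum, he]; ring
      rw [hid]
      calc |e B - e A + L * ((B : ℝ) - (A : ℝ) - (n : ℝ) * h)|
          ≤ |e B - e A| + |L * ((B : ℝ) - (A : ℝ) - (n : ℝ) * h)| := abs_add_le _ _
        _ ≤ (|e B| + |e A|) + |L| * |(B : ℝ) - (A : ℝ) - (n : ℝ) * h| := by
            rw [abs_mul]; gcongr; exact abs_sub _ _
        _ ≤ (M + M) + |L| * 1 := by gcongr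
        _ = 2 * M + |L| := by ring
    have h1 : (∑ i ∈ winIdx n a b, y i) / ((n : ℝ) * h) - L
        = ((∑ i ∈ winIdx n a b, y i) - L * ((n : ℝ) * h)) / ((n : ℝ) * h) := by
      field_simp
    rw [h1, abs_div, abs_of_pos hnh]
    show _ ≤ (2 * maxAbs e ⌊(n : ℝ) * T⌋₊ + |L|) / ((n : ℝ) * h)
    gcongr

lemma sup_comp_tendsto {s : Set ℝ} (hs : s.Nonempty) {k : ℕ}
    (w : ℕ → ℝ → (Fin k → ℝ)) (w₀ : Fin k → ℝ)
    (hw : ∀ j, ∀ δ > (0:ℝ), ∀ᶠ n in atTop, ∀ t ∈ s, |w n t j - w₀ j| < δ)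
    (G : (Fin k → ℝ) → ℝ) (hG : ContinuousAt G w₀) :
    Tendsto (fun n => ⨆ t : s, |G (w n (t : ℝ)) - G w₀|) atTop (nhds 0) := by
  have hsne : Nonempty s := hs.to_subtype
  rw [Metric.tendsto_nhds]
  intro ε hε
  obtain ⟨δ, hδ, hGδ⟩ := Metric.continuousAt_iff.1 hG (ε / 2) (by positivity)
  have hall : ∀ᶠ n in atTop, ∀ j, ∀ t ∈ s, |w n t j - w₀ j| < δ :=
    (Filter.eventually_all).2 (fun j => hw j δ hδ)
  filter_upwards [hall] with n hn
  have hbound : ∀ t : s, |G (w n (t : ℝ)) - G w₀| ≤ ε / 2 := by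
    intro t
    have hd : dist (w n (t : ℝ)) w₀ < δ := by
      rw [dist_pi_lt_iff hδ]
      intro j
      rw [Real.dist_eq]
      exact hn j t t.2
    have := hGδ hd
    rw [Real.dist_eq] at this
    exact this.le
  have hsup_le : (⨆ t : s, |G (w n (t : ℝ)) - G w₀|) ≤ ε / 2 :=
    ciSup_le hbound
  have hsup_ge : (0:ℝ) ≤ ⨆ t : s, |G (w n (t : ℝ)) - G w₀| := by
    obtain ⟨t⟩ := hsne
    exact le_trans (abs_nonneg _)
      (le_ciSup ⟨ε / 2, fun r ⟨t', ht'⟩ => ht' ▸ hbound t'⟩ t)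
  rw [Real.dist_eq, sub_zero, abs_of_nonneg hsup_ge]
  linarith

noncomputable def GG (m : ℝ) (v : Fin 10 → ℝ) : ℝ :=
  (g3 m (v 5) (v 6) (v 7) (v 9) + g3 m (v 0) (v 1) (v 2) (v 4)) /
    (Real.sqrt (g2 m (v 5) (v 6) (v 9) + g2 m (v 0) (v 1) (v 4)) *
      Real.sqrt ((g4 m (v 5) (v 6) (v 7) (v 8) (v 9) - (g2 m (v 5) (v 6) (v 9)) ^ 2)
        + (g4 m (v 0) (v 1) (v 2) (v 3) (v 4) - (g2 m (v 0) (v 1) (v 4)) ^ 2)))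

noncomputable def wvec (n : ℕ) (h m : ℝ) (x : ℕ → ℝ) (t : ℝ) : Fin 10 → ℝ :=
  ![wB n h (t - h) t m x 1, wB n h (t - h) t m x 2, wB n h (t - h) t m x 3,
    wB n h (t - h) t m x 4, wc n h (t - h) t,
    wB n h t (t + h) m x 1, wB n h t (t + h) m x 2, wB n h t (t + h) m x 3,
    wB n h t (t + h) m x 4, wc n h t (t + h)]

lemma gd_eval (m : ℝ) : gd m 0 1 = 0 := by simp [gd]
lemma g2_eval (m σ2 : ℝ) : g2 m 0 σ2 1 = σ2 := by simp [g2, gd_eval]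
lemma g3_eval (m σ2 m3 : ℝ) : g3 m 0 σ2 m3 1 = m3 := by simp [g3, gd_eval]
lemma g4_eval (m σ2 m3 μ4 : ℝ) : g4 m 0 σ2 m3 μ4 1 = μ4 := by simp [g4, gd_eval]

lemma rhoHat_eq_GG (n : ℕ) (h m t : ℝ) (x : ℕ → ℝ) :
    rhoHat n h t x = GG m (wvec n h m x t) := by
  unfold rhoHat winNu2
  rw [winCM_two n h t (t + h) m x, winCM_two n h (t - h) t m x,
    winCM_three n h t (t + h) m x, winCM_three n h (t - h) t m x,
    winCM_four n h t (t + h) m x, winCM_four n h (t - h) t m x]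
  rfl

lemma evb {h T : ℝ} (ε : ℕ → ℝ) (hε : Tendsto ε atTop (nhds 0)) (Q : ℕ → ℝ → ℝ) (L : ℝ)
    (hb : ∀ n : ℕ, 1 ≤ n → ∀ t ∈ Set.Icc h (T - h), |Q n t - L| ≤ ε n) :
    ∀ δ > (0:ℝ), ∀ᶠ n in atTop, ∀ t ∈ Set.Icc h (T - h), |Q n t - L| < δ := by
  intro δ hδ
  have h1 : ∀ᶠ n in atTop, ε n < δ := hε.eventually (eventually_lt_nhds hδ)
  filter_upwards [h1, eventually_ge_atTop 1] with n hn1 hn2 t ht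
  exact lt_of_le_of_lt (hb n hn2 t ht) hn1

lemma det_main (x : ℕ → ℝ) (m σ2 m3 ν2 ρ h T : ℝ) (hh : 0 < h) (hT : 2 * h ≤ T)
    (hσ2pos : 0 < σ2) (hν2pos : 0 < ν2)
    (hρ : ρ = m3 / (Real.sqrt σ2 * Real.sqrt ν2))
    (h1 : Tendsto (fun k : ℕ => (∑ i ∈ Finset.range k, (x i - m) ^ 1) / (k : ℝ)) atTop (nhds 0))
    (h2 : Tendsto (fun k : ℕ => (∑ i ∈ Finset.range k, (x i - m) ^ 2) / (k : ℝ)) atTop (nhds σ2))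
    (h3 : Tendsto (fun k : ℕ => (∑ i ∈ Finset.range k, (x i - m) ^ 3) / (k : ℝ)) atTop (nhds m3))
    (h4 : Tendsto (fun k : ℕ => (∑ i ∈ Finset.range k, (x i - m) ^ 4) / (k : ℝ)) atTop
      (nhds (ν2 + σ2 ^ 2))) :
    Tendsto (fun n : ℕ => ⨆ t : Set.Icc h (T - h), |rhoHat n h (t : ℝ) x - ρ|)
      atTop (nhds 0) := by
  have hT0 : 0 < T := lt_of_lt_of_le (by linarith) hT
  have hs : (Set.Icc h (T - h)).Nonempty := Set.nonempty_Icc.2 (by linarith)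
  set w₀ : Fin 10 → ℝ := ![0, σ2, m3, ν2 + σ2 ^ 2, 1, 0, σ2, m3, ν2 + σ2 ^ 2, 1] with hw₀
  -- continuity of GG at w₀
  have hd1 : g2 m (w₀ 5) (w₀ 6) (w₀ 9) + g2 m (w₀ 0) (w₀ 1) (w₀ 4) = 2 * σ2 := by
    show g2 m 0 σ2 1 + g2 m 0 σ2 1 = 2 * σ2
    rw [g2_eval]; ring
  have hd2 : (g4 m (w₀ 5) (w₀ 6) (w₀ 7) (w₀ 8) (w₀ 9) - (g2 m (w₀ 5) (w₀ 6) (w₀ 9)) ^ 2)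
      + (g4 m (w₀ 0) (w₀ 1) (w₀ 2) (w₀ 3) (w₀ 4) - (g2 m (w₀ 0) (w₀ 1) (w₀ 4)) ^ 2)
      = 2 * ν2 := by
    show (g4 m 0 σ2 m3 (ν2 + σ2 ^ 2) 1 - (g2 m 0 σ2 1) ^ 2)
        + (g4 m 0 σ2 m3 (ν2 + σ2 ^ 2) 1 - (g2 m 0 σ2 1) ^ 2) = 2 * ν2
    rw [g4_eval, g2_eval]; ring
  have hnum : g3 m (w₀ 5) (w₀ 6) (w₀ 7) (w₀ 9) + g3 m (w₀ 0) (w₀ 1) (w₀ 2) (w₀ 4)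
      = 2 * m3 := by
    show g3 m 0 σ2 m3 1 + g3 m 0 σ2 m3 1 = 2 * m3
    rw [g3_eval]; ring
  have hden_ne : Real.sqrt (g2 m (w₀ 5) (w₀ 6) (w₀ 9) + g2 m (w₀ 0) (w₀ 1) (w₀ 4)) *
      Real.sqrt ((g4 m (w₀ 5) (w₀ 6) (w₀ 7) (w₀ 8) (w₀ 9) - (g2 m (w₀ 5) (w₀ 6) (w₀ 9)) ^ 2)
        + (g4 m (w₀ 0) (w₀ 1) (w₀ 2) (w₀ 3) (w₀ 4) - (g2 m (w₀ 0) (w₀ 1) (w₀ 4)) ^ 2)) ≠ 0 := by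
    rw [hd1, hd2]
    have s1 : 0 < Real.sqrt (2 * σ2) := Real.sqrt_pos.2 (by linarith)
    have s2 : 0 < Real.sqrt (2 * ν2) := Real.sqrt_pos.2 (by linarith)
    positivity
  have hGcont : ContinuousAt (GG m) w₀ := by
    unfold GG g2 g3 g4 gd
    exact ContinuousAt.div (by fun_prop) (by fun_prop) hden_ne
  have hGval : GG m w₀ = ρ := by
    rw [GG, hnum, hd1, hd2, hρ]
    rw [Real.sqrt_mul (by norm_num) σ2, Real.sqrt_mul (by norm_num) ν2]
    have h22 : Real.sqrt 2 * Real.sqrt 2 = 2 := Real.mul_self_sqrt (by norm_num)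
    have hsσ : Real.sqrt σ2 ≠ 0 := ne_of_gt (Real.sqrt_pos.2 hσ2pos)
    have hsν : Real.sqrt ν2 ≠ 0 := ne_of_gt (Real.sqrt_pos.2 hν2pos)
    have h2ne : Real.sqrt 2 ≠ 0 := by positivity
    calc (2 * m3) / (Real.sqrt 2 * Real.sqrt σ2 * (Real.sqrt 2 * Real.sqrt ν2))
        = (2 * m3) / (2 * (Real.sqrt σ2 * Real.sqrt ν2)) := by
          rw [show Real.sqrt 2 * Real.sqrt σ2 * (Real.sqrt 2 * Real.sqrt ν2)
            = (Real.sqrt 2 * Real.sqrt 2) * (Real.sqrt σ2 * Real.sqrt ν2) by ring, h22]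
      _ = m3 / (Real.sqrt σ2 * Real.sqrt ν2) := by
          rw [mul_div_mul_left _ _ (two_ne_zero)]
  -- coordinate bounds
  have hcoord : ∀ j : Fin 10, ∀ δ > (0:ℝ), ∀ᶠ n in atTop,
      ∀ t ∈ Set.Icc h (T - h), |wvec n h m x t j - w₀ j| < δ := by
    have hwin : ∀ (p : ℕ) (L : ℝ),
        Tendsto (fun k : ℕ => (∑ i ∈ Finset.range k, (x i - m) ^ p) / (k : ℝ)) atTop (nhds L) →
        (∀ δ > (0:ℝ), ∀ᶠ n in atTop, ∀ t ∈ Set.Icc h (T - h),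
          |wB n h (t - h) t m x p - L| < δ) ∧
        (∀ δ > (0:ℝ), ∀ᶠ n in atTop, ∀ t ∈ Set.Icc h (T - h),
          |wB n h t (t + h) m x p - L| < δ) := by
      intro p L hL
      obtain ⟨ε, hε, hb⟩ := window_bound (fun i => (x i - m) ^ p) L h T hh hT0 hL
      constructor
      · refine evb ε hε _ L (fun n hn t ht => ?_)
        exact hb n hn (t - h) t (by linarith [ht.1]) (by ring) (by linarith [ht.2])
      · refine evb ε hε _ L (fun n hn t ht => ?_)
        exact hb n hn t (t + h) (by linarith [ht.1, hh]) rfl (by linarith [ht.2])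
    have hcnt : (∀ δ > (0:ℝ), ∀ᶠ n in atTop, ∀ t ∈ Set.Icc h (T - h),
          |wc n h (t - h) t - 1| < δ) ∧
        (∀ δ > (0:ℝ), ∀ᶠ n in atTop, ∀ t ∈ Set.Icc h (T - h),
          |wc n h t (t + h) - 1| < δ) := by
      have hone : Tendsto (fun k : ℕ => (∑ i ∈ Finset.range k, (1:ℝ)) / (k : ℝ)) atTop
          (nhds 1) := by
        have : ∀ᶠ k : ℕ in atTop, (∑ i ∈ Finset.range k, (1:ℝ)) / (k : ℝ) = 1 := by
          filter_upwards [eventually_ge_atTop 1] with k hk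
          have : (k : ℝ) ≠ 0 := by positivity
          simp [this]
        rw [tendsto_congr' this]
        exact tendsto_const_nhds
      obtain ⟨ε, hε, hb⟩ := window_bound (fun _ => (1:ℝ)) 1 h T hh hT0 hone
      have hwc : ∀ n a b, wc n h a b = (∑ i ∈ winIdx n a b, (1:ℝ)) / ((n : ℝ) * h) := by
        intro n a b; rw [wc]; simp
      constructor
      · refine evb ε hε _ 1 (fun n hn t ht => ?_)
        rw [hwc]
        exact hb n hn (t - h) t (by linarith [ht.1]) (by ring) (by linarith [ht.2])
      · refine evb ε hε _ 1 (fun n hn t ht => ?_)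
        rw [hwc]
        exact hb n hn t (t + h) (by linarith [ht.1, hh]) rfl (by linarith [ht.2])
    intro j
    fin_cases j
    · exact (hwin 1 0 h1).1
    · exact (hwin 2 σ2 h2).1
    · exact (hwin 3 m3 h3).1
    · exact (hwin 4 (ν2 + σ2 ^ 2) h4).1
    · exact hcnt.1
    · exact (hwin 1 0 h1).2
    · exact (hwin 2 σ2 h2).2
    · exact (hwin 3 m3 h3).2
    · exact (hwin 4 (ν2 + σ2 ^ 2) h4).2
    · exact hcnt.2
  have hmain := sup_comp_tendsto hs (fun n t => wvec n h m x t) w₀ hcoord (GG m) hGcont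
  refine hmain.congr (fun n => ?_)
  refine iSup_congr (fun t => ?_)
  rw [← rhoHat_eq_GG n h m (t : ℝ) x, hGval]


lemma abs_le_poly4 (x : ℝ) : |x| ≤ 1 + x ^ 4 := by
  rcases le_or_gt |x| 1 with h | h
  · have : (0:ℝ) ≤ x ^ 4 := by positivity
    linarith
  · have h1 : |x| ≤ |x| ^ 4 := by
      calc |x| = |x| ^ 1 := (pow_one _).symm
      _ ≤ |x| ^ 4 := pow_le_pow_right₀ h.le (by norm_num)
    have h2 : |x| ^ 4 = x ^ 4 := by
      rw [← abs_pow, abs_of_nonneg (by positivity : (0:ℝ) ≤ x ^ 4)]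
    linarith

lemma one_add_abs_pow4 (x : ℝ) : (1 + |x|) ^ 4 ≤ 8 * (1 + x ^ 4) := by
  have hx : (0:ℝ) ≤ |x| := abs_nonneg x
  have h2 : |x| ^ 4 = x ^ 4 := by
    rw [← abs_pow, abs_of_nonneg (by positivity : (0:ℝ) ≤ x ^ 4)]
  nlinarith [sq_nonneg (|x| - 1), sq_nonneg (|x| ^ 2 - 1), sq_nonneg (|x| ^ 2 - |x|)]

/-- For i.i.d. random variables with finite fourth moment, positive variance and
positive `ν²`, the local correlation estimator `ρ̂_n(t)` converges almost surely
to `ρ = μ^{3}/(σν)`, uniformly over `t ∈ [h, T-h]`. -/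
theorem rhoHat_uniform_slln
    {Ω : Type*} [MeasurableSpace Ω] (μ : Measure Ω) [IsProbabilityMeasure μ]
    (X : ℕ → Ω → ℝ)
    (hmeas : ∀ i, Measurable (X i))
    (hindep : iIndepFun X μ)
    (hident : ∀ i, IdentDistrib (X i) (X 0) μ μ)
    (hint4 : Integrable (fun ω => (X 0 ω) ^ 4) μ)
    (h T : ℝ) (hh : 0 < h) (hT : 2 * h ≤ T)
    (m σ2 m3 ν2 ρ : ℝ)
    (hm : m = ∫ ω, X 0 ω ∂μ)
    (hσ2 : σ2 = ∫ ω, (X 0 ω - m) ^ 2 ∂μ)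
    (hm3 : m3 = ∫ ω, (X 0 ω - m) ^ 3 ∂μ)
    (hν2 : ν2 = (∫ ω, (X 0 ω - m) ^ 4 ∂μ) - σ2 ^ 2)
    (hσ2pos : 0 < σ2) (hν2pos : 0 < ν2)
    (hρ : ρ = m3 / (Real.sqrt σ2 * Real.sqrt ν2)) :
    ∀ᵐ ω ∂μ,
      Tendsto
        (fun n : ℕ =>
          ⨆ t : Set.Icc h (T - h), |rhoHat n h (t : ℝ) (fun i => X i ω) - ρ|)
        atTop (nhds 0) := by
  have hdom : Integrable (fun ω => 8 * (1 + |m|) ^ 4 * (1 + (X 0 ω) ^ 4)) μ :=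
    ((integrable_const (1:ℝ)).add hint4).const_mul _
  have hintX : Integrable (X 0) μ := by
    refine Integrable.mono' ((integrable_const (1:ℝ)).add hint4)
      (hmeas 0).aestronglyMeasurable ?_
    filter_upwards with ω
    rw [Real.norm_eq_abs]
    exact abs_le_poly4 (X 0 ω)
  have hintZ : ∀ p : ℕ, p ≤ 4 → Integrable (fun ω => (X 0 ω - m) ^ p) μ := by
    intro p hp
    refine Integrable.mono' hdom
      (((hmeas 0).sub measurable_const).pow_const p).aestronglyMeasurable ?_
    filter_upwards with ω
    rw [Real.norm_eq_abs]
    set u := X 0 ω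
    calc |(u - m) ^ p| = |u - m| ^ p := abs_pow _ _
      _ ≤ (1 + |u - m|) ^ p :=
          pow_le_pow_left₀ (abs_nonneg _) (by linarith [abs_nonneg (u - m)]) p
      _ ≤ (1 + |u - m|) ^ 4 :=
          pow_le_pow_right₀ (by linarith [abs_nonneg (u - m)]) hp
      _ ≤ ((1 + |m|) * (1 + |u|)) ^ 4 := by
          apply pow_le_pow_left₀ (by linarith [abs_nonneg (u - m)])
          have h1 : |u - m| ≤ |u| + |m| := abs_sub _ _
          nlinarith [mul_nonneg (abs_nonneg m) (abs_nonneg u)]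
      _ = (1 + |m|) ^ 4 * (1 + |u|) ^ 4 := mul_pow _ _ _
      _ ≤ (1 + |m|) ^ 4 * (8 * (1 + u ^ 4)) := by
          apply mul_le_mul_of_nonneg_left (one_add_abs_pow4 u) (by positivity)
      _ = 8 * (1 + |m|) ^ 4 * (1 + u ^ 4) := by ring
  have hφ : ∀ p : ℕ, Measurable (fun u : ℝ => (u - m) ^ p) :=
    fun p => (measurable_id.sub_const m).pow_const p
  have hslln : ∀ p : ℕ, p ≤ 4 → ∀ᵐ ω ∂μ,
      Tendsto (fun k : ℕ => (∑ i ∈ Finset.range k, (X i ω - m) ^ p) / (k : ℝ)) atTop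
        (nhds (∫ ω, (X 0 ω - m) ^ p ∂μ)) := by
    intro p hp
    have hind' : Pairwise (Function.onFun (IndepFun · · μ) (fun i ω => (X i ω - m) ^ p)) :=
      fun i j hij => ((hindep.indepFun hij).comp (hφ p) (hφ p))
    have hid' : ∀ i, IdentDistrib (fun ω => (X i ω - m) ^ p) (fun ω => (X 0 ω - m) ^ p) μ μ :=
      fun i => (hident i).comp (hφ p)
    filter_upwards [strong_law_ae (fun i ω => (X i ω - m) ^ p) (hintZ p hp) hind' hid']
      with ω hω
    refine hω.congr (fun k => ?_)
    rw [smul_eq_mul, ← div_eq_inv_mul]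
  have e1 : ∫ ω, (X 0 ω - m) ^ 1 ∂μ = 0 := by
    simp only [pow_one]
    rw [integral_sub hintX (integrable_const m), integral_const]
    simp [hm]
  have e4 : ∫ ω, (X 0 ω - m) ^ 4 ∂μ = ν2 + σ2 ^ 2 := by linarith [hν2]
  filter_upwards [hslln 1 (by norm_num), hslln 2 (by norm_num), hslln 3 (by norm_num),
    hslln 4 (by norm_num)] with ω hω1 hω2 hω3 hω4
  rw [e1] at hω1
  rw [← hσ2] at hω2
  rw [← hm3] at hω3
  rw [e4] at hω4
  exact det_main (fun i => X i ω) m σ2 m3 ν2 ρ h T hh hT hσ2pos hν2pos hρ hω1 hω2 hω3 hω4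
end

section
/- Let (X_{1,i})_{i≥1} and (X_{2,i})_{i≥1} be independent sequences of i.i.d. integrable real random variables with means μ₁ and μ₂. Fix reals h > 0 and c ≥ h. For n ≥ 1 define the compound sequence Z^{(n)}_i = X_{1,i} for i ≤ ⌊nc⌋ and Z^{(n)}_i = X_{2,i} for i > ⌊nc⌋, and for t ∈ [c, c+h] the left-window mean μ̂^{(n)}_ℓ(t) = (1/(nh)) ∑_{i=⌊n(t−h)⌋+1}^{⌊nt⌋} Z^{(n)}_i. Then sup_{t ∈ [c, c+h]} | μ̂^{(n)}_ℓ(t) − ( ((c−(t−h))/h)·μ₁ + ((t−c)/h)·μ₂ ) | → 0 almost surely as n → ∞; that is, the windowed mean converges uniformly to the linear interpolation between μ₁ and μ₂ determined by the overlap of the window with the change point c. -/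
open MeasureTheory ProbabilityTheory Filter Finset

private lemma floor_diff_le_one' {x y : ℝ} (hx : 0 ≤ x) (hxy : x ≤ y) :
    |((⌊y⌋₊ : ℝ) - (⌊x⌋₊ : ℝ)) - (y - x)| ≤ 1 := by
  have hy : 0 ≤ y := hx.trans hxy
  have h1 := Nat.floor_le hx
  have h2 := Nat.floor_le hy
  have h3 := Nat.lt_floor_add_one x
  have h4 := Nat.lt_floor_add_one y
  rw [abs_le]
  constructor <;> linarith

private lemma eventually_unif_bound (E : ℕ → ℝ)
    (hE : Tendsto (fun k : ℕ => E k / k) atTop (nhds 0)) {ε : ℝ} (hε : 0 < ε) :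
    ∀ᶠ N : ℕ in atTop, ∀ k ≤ N, |E k| ≤ ε * N := by
  obtain ⟨K₀, hK₀⟩ := (Metric.tendsto_atTop.mp hE) ε hε
  set K := max K₀ 1 with hK
  set C := ∑ j ∈ range K, |E j| with hCdef
  have hC : ∀ k < K, |E k| ≤ C :=
    fun k hk => Finset.single_le_sum (f := fun j => |E j|) (fun j _ => abs_nonneg _)
      (mem_range.mpr hk)
  filter_upwards [eventually_ge_atTop K, eventually_ge_atTop ⌈C / ε⌉₊] with N hNK hNC k hk
  by_cases hkK : k < K
  · refine (hC k hkK).trans ?_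
    have h1 : C / ε ≤ (N : ℝ) := by
      calc C / ε ≤ (⌈C / ε⌉₊ : ℝ) := Nat.le_ceil _
        _ ≤ N := by exact_mod_cast hNC
    calc C = (C / ε) * ε := by field_simp
      _ ≤ (N : ℝ) * ε := mul_le_mul_of_nonneg_right h1 hε.le
      _ = ε * N := mul_comm _ _
  · push_neg at hkK
    have hk1 : 1 ≤ k := le_trans (le_max_right _ _) hkK
    have hkc : (0:ℝ) < k := by exact_mod_cast hk1
    have hd := hK₀ k (le_trans (le_max_left _ _) hkK)
    rw [Real.dist_eq, sub_zero] at hd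
    have h1 : |E k| = |E k / k| * k := by
      rw [abs_div, abs_of_pos hkc, div_mul_cancel₀]
      exact hkc.ne'
    have hkN : (k : ℝ) ≤ N := by exact_mod_cast hk
    calc |E k| = |E k / k| * k := h1
      _ ≤ ε * k := mul_le_mul_of_nonneg_right hd.le hkc.le
      _ ≤ ε * N := mul_le_mul_of_nonneg_left hkN hε.le

/-- For two independent i.i.d. integrable sequences spliced at the change point
`⌊nc⌋` (here `X false` is the pre-change and `X true` the post-change sequence),
the left-window mean `(1/(nh)) ∑_{⌊n(t-h)⌋ < i ≤ ⌊nt⌋} Z^{(n)}_i` converges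
almost surely, uniformly over `t ∈ [c, c+h]`, to the linear interpolation
`((c-(t-h))/h)·μ₁ + ((t-c)/h)·μ₂`. -/
theorem windowed_mean_change_point_interpolation
    {Ω : Type*} [MeasurableSpace Ω] (μ : Measure Ω) [IsProbabilityMeasure μ]
    (X : Bool → ℕ → Ω → ℝ)
    (hmeas : ∀ u i, Measurable (X u i))
    (hindep : iIndepFun (fun p : Bool × ℕ => X p.1 p.2) μ)
    (hident : ∀ u i, IdentDistrib (X u i) (X u 0) μ μ)
    (hint : ∀ u, Integrable (X u 0) μ)
    (μ1 μ2 : ℝ)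
    (hμ1 : μ1 = ∫ ω, X false 0 ω ∂μ)
    (hμ2 : μ2 = ∫ ω, X true 0 ω ∂μ)
    (h c : ℝ) (hh : 0 < h) (hc : h ≤ c)
    -- the compound (spliced) sequence: `X false` before the change point, `X true` after
    (Z : ℕ → ℕ → Ω → ℝ)
    (hZ : ∀ n i ω, Z n i ω =
      if i < ⌊(n : ℝ) * c⌋₊ then X false i ω else X true i ω) :
    ∀ᵐ ω ∂μ,
      Tendsto
        (fun n : ℕ =>
          ⨆ t : Set.Icc c (c + h),
            |(∑ i ∈ Finset.Ico ⌊(n : ℝ) * ((t : ℝ) - h)⌋₊ ⌊(n : ℝ) * (t : ℝ)⌋₊,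
                Z n i ω) / ((n : ℝ) * h)
              - (((c - ((t : ℝ) - h)) / h) * μ1 + (((t : ℝ) - c) / h) * μ2)|)
        atTop (nhds 0) := by
  have pairwise_indep : ∀ u : Bool, Pairwise (Function.onFun (IndepFun · · μ) (X u)) := by
    intro u i j hij
    exact hindep.indepFun (show ((u, i) : Bool × ℕ) ≠ (u, j) by simpa using hij)
  have slln1 := strong_law_ae_real (X false) (hint false) (pairwise_indep false) (hident false)
  have slln2 := strong_law_ae_real (X true) (hint true) (pairwise_indep true) (hident true)
  filter_upwards [slln1, slln2] with ω hw1 hw2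
  have hw1' : Tendsto (fun n : ℕ => (∑ i ∈ range n, X false i ω) / n) atTop (nhds μ1) := by
    rw [hμ1]; exact hw1
  have hw2' : Tendsto (fun n : ℕ => (∑ i ∈ range n, X true i ω) / n) atTop (nhds μ2) := by
    rw [hμ2]; exact hw2
  set E1 : ℕ → ℝ := fun k => (∑ i ∈ range k, X false i ω) - k * μ1 with hE1def
  set E2 : ℕ → ℝ := fun k => (∑ i ∈ range k, X true i ω) - k * μ2 with hE2def
  have hE1 : Tendsto (fun k : ℕ => E1 k / k) atTop (nhds 0) := by
    have heq : (fun k : ℕ => E1 k / k)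
        =ᶠ[atTop] fun k : ℕ => (∑ i ∈ range k, X false i ω) / k - μ1 := by
      filter_upwards [eventually_ge_atTop 1] with k hk
      have hkne : (k:ℝ) ≠ 0 := by
        have : (0:ℝ) < k := by exact_mod_cast hk
        exact this.ne'
      simp only [hE1def]
      field_simp
    rw [tendsto_congr' heq]
    simpa using hw1'.sub_const μ1
  have hE2 : Tendsto (fun k : ℕ => E2 k / k) atTop (nhds 0) := by
    have heq : (fun k : ℕ => E2 k / k)
        =ᶠ[atTop] fun k : ℕ => (∑ i ∈ range k, X true i ω) / k - μ2 := by
      filter_upwards [eventually_ge_atTop 1] with k hk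
      have hkne : (k:ℝ) ≠ 0 := by
        have : (0:ℝ) < k := by exact_mod_cast hk
        exact this.ne'
      simp only [hE2def]
      field_simp
    rw [tendsto_congr' heq]
    simpa using hw2'.sub_const μ2
  have hc0 : 0 < c := lt_of_lt_of_le hh hc
  have hch : 0 < c + h := by linarith
  rw [NormedAddCommGroup.tendsto_nhds_zero]
  intro ε hε
  set ε' : ℝ := ε * h / (16 * (c + h)) with hε'def
  have hε' : 0 < ε' := by positivity
  have hfloorTop : Tendsto (fun n : ℕ => ⌊(n : ℝ) * (c + h)⌋₊) atTop atTop :=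
    tendsto_nat_floor_atTop.comp (tendsto_natCast_atTop_atTop.atTop_mul_const hch)
  have hB1 := hfloorTop.eventually (eventually_unif_bound E1 hE1 hε')
  have hB2 := hfloorTop.eventually (eventually_unif_bound E2 hE2 hε')
  have hsmall : ∀ᶠ n : ℕ in atTop, (|μ1| + |μ2|) / ((n:ℝ) * h) ≤ ε / 4 := by
    have hfun : (fun n : ℕ => (|μ1| + |μ2|) / ((n:ℝ) * h))
        = fun n : ℕ => ((|μ1| + |μ2|) / h) / (n:ℝ) := by
      funext n; rw [div_div, mul_comm]
    have ht : Tendsto (fun n : ℕ => (|μ1| + |μ2|) / ((n:ℝ) * h)) atTop (nhds 0) := by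
      rw [hfun]
      simpa using tendsto_const_div_atTop_nhds_zero_nat ((|μ1| + |μ2|) / h)
    exact ht.eventually (eventually_le_nhds (by positivity))
  filter_upwards [hB1, hB2, hsmall, eventually_ge_atTop 1] with n hb1 hb2 hsm hn1
  have hn0 : (0:ℝ) < n := by exact_mod_cast hn1
  have hnh : (0:ℝ) < (n:ℝ) * h := by positivity
  haveI : Nonempty (Set.Icc c (c + h)) := ⟨⟨c, le_refl c, by linarith⟩⟩
  rw [Real.norm_eq_abs, abs_of_nonneg (Real.iSup_nonneg fun t => abs_nonneg _)]
  refine lt_of_le_of_lt (ciSup_le ?_) (show ε / 2 < ε by linarith)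
  rintro ⟨t, htc, hth⟩
  show |(∑ i ∈ Finset.Ico ⌊(n : ℝ) * (t - h)⌋₊ ⌊(n : ℝ) * t⌋₊,
            Z n i ω) / ((n : ℝ) * h)
          - (((c - (t - h)) / h) * μ1 + ((t - c) / h) * μ2)| ≤ ε / 2
  set a := ⌊(n : ℝ) * (t - h)⌋₊ with hadef
  set m := ⌊(n : ℝ) * c⌋₊ with hmdef
  set b := ⌊(n : ℝ) * t⌋₊ with hbdef
  have hth0 : 0 ≤ t - h := by linarith
  have hnth : (0:ℝ) ≤ (n:ℝ) * (t - h) := by positivity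
  have hle1 : (n:ℝ) * (t - h) ≤ (n:ℝ) * c :=
    mul_le_mul_of_nonneg_left (by linarith) (Nat.cast_nonneg n)
  have hle2 : (n:ℝ) * c ≤ (n:ℝ) * t :=
    mul_le_mul_of_nonneg_left htc (Nat.cast_nonneg n)
  have hle3 : (n:ℝ) * t ≤ (n:ℝ) * (c + h) :=
    mul_le_mul_of_nonneg_left hth (Nat.cast_nonneg n)
  have ham : a ≤ m := Nat.floor_mono hle1
  have hmb : m ≤ b := Nat.floor_mono hle2
  have hsum : (∑ i ∈ Finset.Ico a b, Z n i ω)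
      = ((∑ i ∈ range m, X false i ω) - (∑ i ∈ range a, X false i ω))
        + ((∑ i ∈ range b, X true i ω) - (∑ i ∈ range m, X true i ω)) := by
    rw [← Finset.sum_Ico_consecutive _ ham hmb]
    congr 1
    · rw [← Finset.sum_Ico_eq_sub _ ham]
      exact Finset.sum_congr rfl fun i hi => by
        rw [hZ, if_pos (Finset.mem_Ico.mp hi).2]
    · rw [← Finset.sum_Ico_eq_sub _ hmb]
      exact Finset.sum_congr rfl fun i hi => by
        rw [hZ, if_neg (not_lt.mpr (Finset.mem_Ico.mp hi).1)]
  have hd1 : |((m:ℝ) - (a:ℝ)) - (n:ℝ) * (c - (t - h))| ≤ 1 := by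
    have hthis := floor_diff_le_one' hnth hle1
    have heq : (n:ℝ) * c - (n:ℝ) * (t - h) = (n:ℝ) * (c - (t - h)) := by ring
    rw [heq] at hthis
    exact hthis
  have hd2 : |((b:ℝ) - (m:ℝ)) - (n:ℝ) * (t - c)| ≤ 1 := by
    have hnc0 : (0:ℝ) ≤ (n:ℝ) * c := by positivity
    have hthis := floor_diff_le_one' hnc0 hle2
    have heq : (n:ℝ) * t - (n:ℝ) * c = (n:ℝ) * (t - c) := by ring
    rw [heq] at hthis
    exact hthis
  -- bounds on the error terms
  set N := ⌊(n:ℝ) * (c + h)⌋₊ with hNdef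
  have hNle : (N : ℝ) ≤ (n:ℝ) * (c + h) := Nat.floor_le (by positivity)
  have hmN : m ≤ N := Nat.floor_mono (le_trans hle2 hle3)
  have haN : a ≤ N := le_trans ham hmN
  have hbN : b ≤ N := Nat.floor_mono hle3
  have hbnd : ∀ k ≤ N, |E1 k| ≤ ε' * ((n:ℝ) * (c + h)) := fun k hk =>
    (hb1 k hk).trans (mul_le_mul_of_nonneg_left hNle hε'.le)
  have hbnd2 : ∀ k ≤ N, |E2 k| ≤ ε' * ((n:ℝ) * (c + h)) := fun k hk =>
    (hb2 k hk).trans (mul_le_mul_of_nonneg_left hNle hε'.le)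
  have hE1m := hbnd m hmN
  have hE1a := hbnd a haN
  have hE2b := hbnd2 b hbN
  have hE2m := hbnd2 m hmN
  -- key algebraic identity
  have key : (∑ i ∈ Finset.Ico a b, Z n i ω) / ((n:ℝ) * h)
        - (((c - (t - h)) / h) * μ1 + ((t - c) / h) * μ2)
      = ((((m:ℝ) - (a:ℝ)) - (n:ℝ) * (c - (t - h))) * μ1
          + (((b:ℝ) - (m:ℝ)) - (n:ℝ) * (t - c)) * μ2
          + (E1 m - E1 a) + (E2 b - E2 m)) / ((n:ℝ) * h) := by
    rw [hsum]
    simp only [hE1def, hE2def]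
    field_simp
    ring
  rw [key, abs_div, abs_of_pos hnh]
  have habs : |(((m:ℝ) - (a:ℝ)) - (n:ℝ) * (c - (t - h))) * μ1
        + (((b:ℝ) - (m:ℝ)) - (n:ℝ) * (t - c)) * μ2
        + (E1 m - E1 a) + (E2 b - E2 m)|
      ≤ (|μ1| + |μ2|) + 4 * (ε' * ((n:ℝ) * (c + h))) := by
    have h4 : |(((m:ℝ) - (a:ℝ)) - (n:ℝ) * (c - (t - h))) * μ1
          + (((b:ℝ) - (m:ℝ)) - (n:ℝ) * (t - c)) * μ2
          + (E1 m - E1 a) + (E2 b - E2 m)|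
        ≤ |(((m:ℝ) - (a:ℝ)) - (n:ℝ) * (c - (t - h))) * μ1|
          + |(((b:ℝ) - (m:ℝ)) - (n:ℝ) * (t - c)) * μ2|
          + (|E1 m| + |E1 a|) + (|E2 b| + |E2 m|) := by
      have t1 := abs_add_le ((((m:ℝ) - (a:ℝ)) - (n:ℝ) * (c - (t - h))) * μ1
          + (((b:ℝ) - (m:ℝ)) - (n:ℝ) * (t - c)) * μ2 + (E1 m - E1 a)) (E2 b - E2 m)
      have t2 := abs_add_le ((((m:ℝ) - (a:ℝ)) - (n:ℝ) * (c - (t - h))) * μ1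
          + (((b:ℝ) - (m:ℝ)) - (n:ℝ) * (t - c)) * μ2) (E1 m - E1 a)
      have t3 := abs_add_le ((((m:ℝ) - (a:ℝ)) - (n:ℝ) * (c - (t - h))) * μ1)
          ((((b:ℝ) - (m:ℝ)) - (n:ℝ) * (t - c)) * μ2)
      have t4 := abs_sub (E1 m) (E1 a)
      have t5 := abs_sub (E2 b) (E2 m)
      linarith
    have m1 : |(((m:ℝ) - (a:ℝ)) - (n:ℝ) * (c - (t - h))) * μ1| ≤ |μ1| := by
      rw [abs_mul]
      calc |((m:ℝ) - (a:ℝ)) - (n:ℝ) * (c - (t - h))| * |μ1| ≤ 1 * |μ1| :=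
        mul_le_mul_of_nonneg_right hd1 (abs_nonneg _)
      _ = |μ1| := one_mul _
    have m2 : |(((b:ℝ) - (m:ℝ)) - (n:ℝ) * (t - c)) * μ2| ≤ |μ2| := by
      rw [abs_mul]
      calc |((b:ℝ) - (m:ℝ)) - (n:ℝ) * (t - c)| * |μ2| ≤ 1 * |μ2| :=
        mul_le_mul_of_nonneg_right hd2 (abs_nonneg _)
      _ = |μ2| := one_mul _
    linarith
  calc |(((m:ℝ) - (a:ℝ)) - (n:ℝ) * (c - (t - h))) * μ1
          + (((b:ℝ) - (m:ℝ)) - (n:ℝ) * (t - c)) * μ2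
          + (E1 m - E1 a) + (E2 b - E2 m)| / ((n:ℝ) * h)
      ≤ ((|μ1| + |μ2|) + 4 * (ε' * ((n:ℝ) * (c + h)))) / ((n:ℝ) * h) :=
        (div_le_div_iff_of_pos_right hnh).mpr habs
    _ = (|μ1| + |μ2|) / ((n:ℝ) * h) + ε / 4 := by
        rw [hε'def]
        field_simp
        ring
    _ ≤ ε / 4 + ε / 4 := by linarith
    _ = ε / 2 := by ring
end

section
/- Let (X_{1,i})_{i≥1} and (X_{2,i})_{i≥1} be independent sequences of i.i.d. real random variables with E[X_{u,1}²] < ∞, means μ_u and variances σ_u², u = 1, 2. Let (K_n) and (N_n) be sequences of natural numbers with K_n ≤ N_n, N_n → ∞ and K_n/N_n → θ for some θ ∈ [0,1]. For each n let μ̂_n and σ̂²_n be the empirical mean and empirical variance of the mixed sample X_{1,1},…,X_{1,K_n}, X_{2,1},…,X_{2,N_n−K_n}. Then almost surely, as n → ∞, μ̂_n → m̄ := θμ₁ + (1−θ)μ₂ and σ̂²_n → θ·[σ₁² + (m̄−μ₁)²] + (1−θ)·[σ₂² + (m̄−μ₂)²]. -/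
open MeasureTheory ProbabilityTheory Filter Finset


lemma mss_sum_sq_sub (s : Finset ℕ) (f : ℕ → ℝ) (c : ℝ) :
    ∑ i ∈ s, (f i - c) ^ 2
      = (∑ i ∈ s, f i ^ 2) - 2 * c * (∑ i ∈ s, f i) + s.card * c ^ 2 := by
  rw [Finset.sum_congr rfl (fun i _ => sub_sq (f i) c), Finset.sum_add_distrib,
    Finset.sum_sub_distrib, Finset.sum_const, nsmul_eq_mul]
  rw [show ∑ i ∈ s, 2 * f i * c = 2 * c * ∑ i ∈ s, f i by
    rw [Finset.mul_sum]; exact Finset.sum_congr rfl fun i _ => by ring]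

lemma mss_aux_ratio (a : ℕ → ℝ) (L θ : ℝ) (K N : ℕ → ℕ) (hKN : ∀ n, K n ≤ N n)
    (hN : Tendsto N atTop atTop)
    (hθ : Tendsto (fun n => (K n : ℝ) / (N n : ℝ)) atTop (nhds θ))
    (ha : Tendsto (fun m => a m / (m : ℝ)) atTop (nhds L)) :
    Tendsto (fun n => a (K n) / (N n : ℝ)) atTop (nhds (θ * L)) := by
  set b : ℕ → ℝ := fun m => a m - L * m with hb
  have hball : ∀ ε > (0:ℝ), ∃ M : ℕ, ∀ m ≥ M, |b m| ≤ ε * m := by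
    intro ε hε
    obtain ⟨M, hM⟩ := (Metric.tendsto_atTop.1 ha) ε hε
    refine ⟨max M 1, fun m hm => ?_⟩
    have hm1 : 1 ≤ m := le_trans (le_max_right M 1) hm
    have hmpos : (0:ℝ) < m := by exact_mod_cast hm1
    have := hM m (le_trans (le_max_left M 1) hm)
    rw [Real.dist_eq] at this
    have : |a m / m - L| * m ≤ ε * m := by
      apply mul_le_mul_of_nonneg_right this.le hmpos.le
    calc |b m| = |a m / m - L| * m := by
          rw [show b m = (a m / m - L) * m by
            simp only [hb]; rw [sub_mul, div_mul_cancel₀ _ hmpos.ne'], abs_mul, abs_of_pos hmpos]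
      _ ≤ ε * m := this
  have hzero : Tendsto (fun n => b (K n) / (N n : ℝ)) atTop (nhds 0) := by
    rw [Metric.tendsto_atTop]
    intro ε hε
    obtain ⟨M, hM⟩ := hball (ε/2) (by linarith)
    set C : ℝ := ∑ m ∈ Finset.range M, |b m| with hC
    have hCnn : 0 ≤ C := Finset.sum_nonneg fun m _ => abs_nonneg _
    have hCb : ∀ m < M, |b m| ≤ C :=
      fun m hm => Finset.single_le_sum (fun i _ => abs_nonneg (b i)) (Finset.mem_range.2 hm)
    obtain ⟨n₀, hn₀⟩ := eventually_atTop.1 (hN.eventually_ge_atTop (⌈2 * C / ε⌉₊ + 1))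
    refine ⟨n₀, fun n hn => ?_⟩
    have hNn : (⌈2 * C / ε⌉₊ + 1 : ℕ) ≤ N n := hn₀ n hn
    have hNpos : (0:ℝ) < N n := by
      have : (1:ℕ) ≤ N n := le_trans (Nat.le_add_left 1 _) hNn
      exact_mod_cast Nat.lt_of_lt_of_le Nat.zero_lt_one this
    have hNC : 2 * C / ε < (N n : ℝ) := by
      calc 2 * C / ε ≤ (⌈2 * C / ε⌉₊ : ℝ) := Nat.le_ceil _
        _ < (⌈2 * C / ε⌉₊ : ℝ) + 1 := by linarith
        _ ≤ (N n : ℝ) := by exact_mod_cast hNn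
    rw [Real.dist_eq, sub_zero, abs_div, abs_of_pos hNpos, div_lt_iff₀ hNpos]
    rcases lt_or_ge (K n) M with hKM | hKM
    · calc |b (K n)| ≤ C := hCb _ hKM
        _ < ε * N n := by
          rcases eq_or_lt_of_le hCnn with h0 | h0
          · rw [← h0]; positivity
          · rw [div_lt_iff₀ hε] at hNC; nlinarith
    · calc |b (K n)| ≤ (ε/2) * K n := hM _ hKM
        _ ≤ (ε/2) * N n := by
          have : (K n : ℝ) ≤ N n := by exact_mod_cast hKN n
          nlinarith
        _ < ε * N n := by nlinarith
  have : Tendsto (fun n => b (K n) / (N n : ℝ) + L * ((K n : ℝ) / N n)) atTop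
      (nhds (0 + L * θ)) := hzero.add (hθ.const_mul L)
  rw [zero_add, mul_comm] at this
  refine this.congr fun n => ?_
  simp only [hb]
  field_simp
  ring

/-- Strong law of large numbers for the empirical mean and empirical variance of
a mixed sample `X_{1,1},…,X_{1,K_n}, X_{2,1},…,X_{2,N_n-K_n}` drawn from two
independent i.i.d. square-integrable sequences (`X false` the first, `X true`
the second): if `K_n/N_n → θ ∈ [0,1]` and `N_n → ∞`, then almost surely
`μ̂_n → m̄ = θμ₁ + (1-θ)μ₂` and
`σ̂²_n → θ[σ₁² + (m̄-μ₁)²] + (1-θ)[σ₂² + (m̄-μ₂)²]`. -/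
theorem mixed_sample_slln
    {Ω : Type*} [MeasurableSpace Ω] (μ : Measure Ω) [IsProbabilityMeasure μ]
    (X : Bool → ℕ → Ω → ℝ)
    (hmeas : ∀ u i, Measurable (X u i))
    (hindep : iIndepFun (fun p : Bool × ℕ => X p.1 p.2) μ)
    (hident : ∀ u i, IdentDistrib (X u i) (X u 0) μ μ)
    (hint2 : ∀ u, Integrable (fun ω => (X u 0 ω) ^ 2) μ)
    (μ1 μ2 σ1sq σ2sq : ℝ)
    (hμ1 : μ1 = ∫ ω, X false 0 ω ∂μ)
    (hμ2 : μ2 = ∫ ω, X true 0 ω ∂μ)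
    (hσ1 : σ1sq = ∫ ω, (X false 0 ω - μ1) ^ 2 ∂μ)
    (hσ2 : σ2sq = ∫ ω, (X true 0 ω - μ2) ^ 2 ∂μ)
    (K N : ℕ → ℕ) (hKN : ∀ n, K n ≤ N n)
    (hN : Tendsto N atTop atTop)
    (θ : ℝ) (hθmem : θ ∈ Set.Icc (0 : ℝ) 1)
    (hθ : Tendsto (fun n => (K n : ℝ) / (N n : ℝ)) atTop (nhds θ))
    (muHat s2Hat : ℕ → Ω → ℝ)
    (hmuHat : ∀ n ω, muHat n ω =
      ((∑ i ∈ Finset.range (K n), X false i ω)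
        + ∑ i ∈ Finset.range (N n - K n), X true i ω) / (N n : ℝ))
    (hs2Hat : ∀ n ω, s2Hat n ω =
      ((∑ i ∈ Finset.range (K n), (X false i ω - muHat n ω) ^ 2)
        + ∑ i ∈ Finset.range (N n - K n), (X true i ω - muHat n ω) ^ 2) / (N n : ℝ))
    (mbar : ℝ) (hmbar : mbar = θ * μ1 + (1 - θ) * μ2) :
    ∀ᵐ ω ∂μ,
      Tendsto (fun n => muHat n ω) atTop (nhds mbar) ∧
      Tendsto (fun n => s2Hat n ω) atTop
        (nhds (θ * (σ1sq + (mbar - μ1) ^ 2) + (1 - θ) * (σ2sq + (mbar - μ2) ^ 2))) := by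
  -- basic integrability
  have hint1 : ∀ u, Integrable (X u 0) μ := fun u =>
    ((memLp_two_iff_integrable_sq (hmeas u 0).aestronglyMeasurable).2 (hint2 u)).integrable
      one_le_two
  -- pairwise independence within each sequence
  have hpair : ∀ u, Pairwise (Function.onFun (IndepFun · · μ) fun i => X u i) := by
    intro u i j hij
    exact hindep.indepFun (f := fun p : Bool × ℕ => X p.1 p.2) (i := (u, i)) (j := (u, j))
      (by simp [hij])
  have hsqmeas : Measurable fun x : ℝ => x ^ 2 := measurable_id.pow_const 2
  have hpairsq : ∀ u, Pairwise (Function.onFun (IndepFun · · μ) fun i ω => X u i ω ^ 2) := by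
    intro u i j hij
    exact ((hpair u) hij).comp hsqmeas hsqmeas
  have hidentsq : ∀ u i, IdentDistrib (fun ω => X u i ω ^ 2) (fun ω => X u 0 ω ^ 2) μ μ :=
    fun u i => (hident u i).comp hsqmeas
  -- strong laws
  have hslm : ∀ u, ∀ᵐ ω ∂μ, Tendsto (fun n : ℕ => (∑ i ∈ range n, X u i ω) / n) atTop
      (nhds (∫ ω, X u 0 ω ∂μ)) := fun u =>
    strong_law_ae_real (fun i => X u i) (hint1 u) (hpair u) (hident u)
  have hsls : ∀ u, ∀ᵐ ω ∂μ, Tendsto (fun n : ℕ => (∑ i ∈ range n, X u i ω ^ 2) / n) atTop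
      (nhds (∫ ω, X u 0 ω ^ 2 ∂μ)) := fun u =>
    strong_law_ae_real (fun i ω => X u i ω ^ 2) (hint2 u) (hpairsq u) (hidentsq u)
  -- second moments
  have hE : ∀ (u : Bool) (m : ℝ), m = ∫ ω, X u 0 ω ∂μ →
      ∫ ω, X u 0 ω ^ 2 ∂μ = (∫ ω, (X u 0 ω - m) ^ 2 ∂μ) + m ^ 2 := by
    intro u m hm
    have h1 : Integrable (fun ω => X u 0 ω * (2 * m)) μ := (hint1 u).mul_const _
    have expand : ∀ ω, (X u 0 ω - m) ^ 2 = X u 0 ω ^ 2 - X u 0 ω * (2 * m) + m ^ 2 := by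
      intro ω; ring
    rw [show (fun ω => (X u 0 ω - m) ^ 2) = fun ω => X u 0 ω ^ 2 - X u 0 ω * (2 * m) + m ^ 2
      from funext expand]
    rw [integral_add (f := fun ω => X u 0 ω ^ 2 - X u 0 ω * (2 * m)) (g := fun _ => m ^ 2)
      ((hint2 u).sub h1) (integrable_const _), integral_sub (hint2 u) h1,
      integral_mul_const, integral_const]
    simp [← hm]
    ring
  -- complementary sequence
  set K' : ℕ → ℕ := fun n => N n - K n with hK'
  have hK'N : ∀ n, K' n ≤ N n := fun n => Nat.sub_le _ _
  have hcast : ∀ n, ((K' n : ℝ)) = (N n : ℝ) - K n := fun n => by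
    simp [hK', Nat.cast_sub (hKN n)]
  have hθ' : Tendsto (fun n => (K' n : ℝ) / (N n : ℝ)) atTop (nhds (1 - θ)) := by
    have h1 : Tendsto (fun n => 1 - (K n : ℝ) / (N n : ℝ)) atTop (nhds (1 - θ)) :=
      tendsto_const_nhds.sub hθ
    refine h1.congr' ?_
    filter_upwards [hN.eventually_ge_atTop 1] with n hn
    have hNpos : (0:ℝ) < N n := by exact_mod_cast hn
    rw [hcast n, sub_div, div_self hNpos.ne']
  -- combine
  filter_upwards [hslm false, hslm true, hsls false, hsls true] with ω hA hB hC hD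
  have t1 : Tendsto (fun n => (∑ i ∈ range (K n), X false i ω) / (N n : ℝ)) atTop
      (nhds (θ * μ1)) := by
    refine mss_aux_ratio (fun m => ∑ i ∈ range m, X false i ω) _ _ K N hKN hN hθ ?_
    rw [hμ1]; exact hA
  have t2 : Tendsto (fun n => (∑ i ∈ range (K' n), X true i ω) / (N n : ℝ)) atTop
      (nhds ((1 - θ) * μ2)) := by
    refine mss_aux_ratio (fun m => ∑ i ∈ range m, X true i ω) _ _ K' N hK'N hN hθ' ?_
    rw [hμ2]; exact hB
  have hmuT : Tendsto (fun n => muHat n ω) atTop (nhds mbar) := by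
    have := t1.add t2
    rw [← hmbar] at this
    refine this.congr fun n => ?_
    rw [hmuHat n ω, add_div]
  refine ⟨hmuT, ?_⟩
  have q1 : Tendsto (fun n => (∑ i ∈ range (K n), X false i ω ^ 2) / (N n : ℝ)) atTop
      (nhds (θ * ∫ ω, X false 0 ω ^ 2 ∂μ)) := mss_aux_ratio (fun m => ∑ i ∈ range m, X false i ω ^ 2) _ _ K N hKN hN hθ hC
  have q2 : Tendsto (fun n => (∑ i ∈ range (K' n), X true i ω ^ 2) / (N n : ℝ)) atTop
      (nhds ((1 - θ) * ∫ ω, X true 0 ω ^ 2 ∂μ)) := mss_aux_ratio (fun m => ∑ i ∈ range m, X true i ω ^ 2) _ _ K' N hK'N hN hθ' hD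
  have qT := (q1.add q2).sub (hmuT.pow 2)
  have key : ∀ᶠ n in atTop, ((∑ i ∈ range (K n), X false i ω ^ 2) / (N n : ℝ)
      + (∑ i ∈ range (K' n), X true i ω ^ 2) / (N n : ℝ)) - muHat n ω ^ 2 = s2Hat n ω := by
    filter_upwards [hN.eventually_ge_atTop 1] with n hn
    have hNpos : (0:ℝ) < N n := by exact_mod_cast hn
    set c := muHat n ω with hc
    have hS : (∑ i ∈ range (K n), X false i ω) + ∑ i ∈ range (K' n), X true i ω
        = c * N n := by
      rw [hc, hmuHat n ω, div_mul_cancel₀ _ hNpos.ne']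
    rw [hs2Hat n ω, mss_sum_sq_sub, mss_sum_sq_sub, Finset.card_range, Finset.card_range]
    rw [show ((∑ i ∈ range (K n), X false i ω ^ 2) - 2 * c * ∑ i ∈ range (K n), X false i ω
        + (K n : ℝ) * c ^ 2
        + ((∑ i ∈ range (K' n), X true i ω ^ 2) - 2 * c * ∑ i ∈ range (K' n), X true i ω
          + (K' n : ℝ) * c ^ 2))
      = (∑ i ∈ range (K n), X false i ω ^ 2) + (∑ i ∈ range (K' n), X true i ω ^ 2)
        - 2 * c * ((∑ i ∈ range (K n), X false i ω) + ∑ i ∈ range (K' n), X true i ω)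
        + ((K n : ℝ) + (K' n : ℝ)) * c ^ 2 by ring]
    rw [hS, hcast n]
    field_simp
    ring
  have hval : θ * (σ1sq + (mbar - μ1) ^ 2) + (1 - θ) * (σ2sq + (mbar - μ2) ^ 2)
      = θ * ∫ ω, X false 0 ω ^ 2 ∂μ + (1 - θ) * ∫ ω, X true 0 ω ^ 2 ∂μ - mbar ^ 2 := by
    rw [hE false μ1 hμ1, hE true μ2 hμ2, ← hσ1, ← hσ2, hmbar]; ring
  rw [hval]
  exact qT.congr' key
end

section
/- Fix reals h > 0, a change point c, and population parameters μ₁, μ₂, σ₁², σ₂² with the deterministic limit functions of the windowed estimators defined as follows: for t ∈ [c, c+h), μ̃_ℓ(t) = ((c−(t−h))/h)μ₁ + ((t−c)/h)μ₂ and σ̃²_ℓ(t) = ((c−(t−h))/h)[σ₁² + (μ̃_ℓ(t)−μ₁)²] + ((t−c)/h)[σ₂² + (μ̃_ℓ(t)−μ₂)²], with μ̃_ℓ(t) = μ₁, σ̃²_ℓ(t) = σ₁² for t < c and μ̃_ℓ(t) = μ₂, σ̃²_ℓ(t) = σ₂² for t ≥ c+h; and μ̃_r(t), σ̃²_r(t)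 defined by the same formulas with t replaced by t+h (so for t ∈ [c−h, c), μ̃_r(t) = ((c−t)/h)μ₁ + ((t+h−c)/h)μ₂, etc.). If μ₁ = μ₂, then: (i) μ̃_r(t) = μ̃_ℓ(t) for all t, so the centering of the expectation statistic, e(t) ∝ μ̃_r(t) − μ̃_ℓ(t), vanishes identically, regardless of the values of σ₁², σ₂²; and (ii) for all t ∈ [c−h, c+h], σ̃²_r(t) − σ̃²_ℓ(t) = ((h − |t−c|)/h)·(σ₂² − σ₁²), i.e. the centering of the variance statistic has a hat shape peaking at t = c with peak value σ₂² − σ₁². -/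
/-- Deterministic limit `μ̃_ℓ(t)` of the left-window mean for a single change
point at `c`: `μ₁` before the window reaches `c`, the linear interpolation
`((c-(t-h))/h)μ₁ + ((t-c)/h)μ₂` while the window `(t-h, t]` overlaps `c`, and
`μ₂` afterwards. -/
noncomputable def tildeMuL (h c μ1 μ2 t : ℝ) : ℝ :=
  if t < c then μ1
  else if t < c + h then ((c - (t - h)) / h) * μ1 + ((t - c) / h) * μ2
  else μ2

/-- Deterministic limit `σ̃²_ℓ(t)` of the left-window empirical variance for a
single change point at `c`, with populations `(μ₁, σ₁²)` and `(μ₂, σ₂²)`. -/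
noncomputable def tildeSigL (h c μ1 μ2 s1 s2 t : ℝ) : ℝ :=
  if t < c then s1
  else if t < c + h then
    ((c - (t - h)) / h) * (s1 + (tildeMuL h c μ1 μ2 t - μ1) ^ 2)
      + ((t - c) / h) * (s2 + (tildeMuL h c μ1 μ2 t - μ2) ^ 2)
  else s2

/-- Deterministic limit `μ̃_r(t) = μ̃_ℓ(t+h)` of the right-window mean. -/
noncomputable def tildeMuR (h c μ1 μ2 t : ℝ) : ℝ := tildeMuL h c μ1 μ2 (t + h)

/-- Deterministic limit `σ̃²_r(t) = σ̃²_ℓ(t+h)` of the right-window empirical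
variance. -/
noncomputable def tildeSigR (h c μ1 μ2 s1 s2 t : ℝ) : ℝ :=
  tildeSigL h c μ1 μ2 s1 s2 (t + h)

private lemma muL_eq (h c μ : ℝ) (hh : 0 < h) (t : ℝ) : tildeMuL h c μ μ t = μ := by
  unfold tildeMuL
  split_ifs <;> first | rfl | (field_simp; ring)

/-- If the expectation does not change (`μ₁ = μ₂`), then (i) the centering of
the expectation statistic vanishes identically, `μ̃_r(t) = μ̃_ℓ(t)` for all `t`,
regardless of `σ₁², σ₂²`; and (ii) the centering of the variance statistic has
hat shape: `σ̃²_r(t) - σ̃²_ℓ(t) = ((h - |t-c|)/h)(σ₂² - σ₁²)` for all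
`t ∈ [c-h, c+h]`, peaking at `t = c` with peak value `σ₂² - σ₁²`. -/
theorem centering_no_mean_change
    (h c μ1 μ2 s1 s2 : ℝ) (hh : 0 < h) (hmean : μ1 = μ2) :
    (∀ t : ℝ, tildeMuR h c μ1 μ2 t = tildeMuL h c μ1 μ2 t) ∧
    (∀ t ∈ Set.Icc (c - h) (c + h),
      tildeSigR h c μ1 μ2 s1 s2 t - tildeSigL h c μ1 μ2 s1 s2 t
        = ((h - |t - c|) / h) * (s2 - s1)) := by
  subst hmean
  constructor
  · intro t
    unfold tildeMuR
    rw [muL_eq _ _ _ hh, muL_eq _ _ _ hh]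
  · rintro t ⟨ht1, ht2⟩
    unfold tildeSigR tildeSigL
    simp only [muL_eq _ _ _ hh, sub_self, ne_eq, OfNat.ofNat_ne_zero,
      not_false_eq_true, zero_pow, add_zero]
    rcases lt_or_ge t c with hc | hc
    · rw [abs_of_neg (by linarith)]
      rw [if_neg (by linarith), if_pos (by linarith), if_pos hc]
      field_simp
      ring
    · rw [abs_of_nonneg (by linarith)]
      rw [if_neg (by linarith), if_neg (by linarith), if_neg (by linarith)]
      rcases lt_or_ge t (c + h) with hch | hch
      · rw [if_pos hch]
        field_simp
        ring
      · rw [if_neg (by linarith)]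
        have : t = c + h := le_antisymm ht2 hch
        subst this
        field_simp
        ring
end
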